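/- arXiv:math/9904165 — 3 statements merged into one kernel-verified Lean document; each statement's English description precedes it below -/
import Mathlib

section
/- Let X₀, X₁ be Banach function spaces over the same σ-finite measure space, both r-concave for some 1 ≤ r < ∞, and let 0 < θ < 1. Then the Calderón product X₀^{1-θ}X₁^{θ} is r-concave with M_(r)(X₀^{1-θ}X₁^{θ}) ≤ M_(r)(X₀)^{1-θ}·M_(r)(X₁)^{θ}. -/
open Complex MeasureTheory Finset

noncomputable section

namespace Paper

/-- The closed unit strip in the complex plane. -/
def Strip : Set ℂ := {z : ℂ | 0 ≤ z.re ∧ z.re ≤ 1}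

/-- The open unit strip in the complex plane. -/
def OStrip : Set ℂ := {z : ℂ | 0 < z.re ∧ z.re < 1}

/-- `N` is a norm on the complex vector space `V`. -/
def IsNormC {V : Type*} [AddCommGroup V] [Module ℂ V] (N : V → ℝ) : Prop :=
  (∀ x, 0 ≤ N x) ∧ (∀ x, N x = 0 → x = 0) ∧
  (∀ (c : ℂ) (x), N (c • x) = ‖c‖ * N x) ∧ (∀ x y, N (x + y) ≤ N x + N y)

/-- `N` is a lattice norm on `ℝⁿ`. -/
def IsLatticeNorm {n : ℕ} (N : (Fin n → ℝ) → ℝ) : Prop :=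
  (∀ x, 0 ≤ N x) ∧ (∀ x, N x = 0 → x = 0) ∧
  (∀ (c : ℝ) (x), N (c • x) = |c| * N x) ∧ (∀ x y, N (x + y) ≤ N x + N y) ∧
  (∀ x y, (∀ i, |x i| ≤ |y i|) → N x ≤ N y)

/-- The `r`-th power `X^r` of a lattice norm: `‖x‖_{X^r} = ‖ |x|^{1/r} ‖_X^r`. -/
def powNorm {n : ℕ} (r : ℝ) (N : (Fin n → ℝ) → ℝ) (x : Fin n → ℝ) : ℝ :=
  (N fun i => |x i| ^ (1 / r)) ^ r

/-- `N` is `p`-convex with constant `C`. -/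
def ConvexWith {n : ℕ} (p C : ℝ) (N : (Fin n → ℝ) → ℝ) : Prop :=
  ∀ (m : ℕ) (x : Fin m → Fin n → ℝ),
    N (fun j => (∑ i, |x i j| ^ p) ^ (1 / p)) ≤ C * (∑ i, N (x i) ^ p) ^ (1 / p)

/-- `N` is `p`-concave with constant `C`. -/
def ConcaveWith {n : ℕ} (p C : ℝ) (N : (Fin n → ℝ) → ℝ) : Prop :=
  ∀ (m : ℕ) (x : Fin m → Fin n → ℝ),
    (∑ i, N (x i) ^ p) ^ (1 / p) ≤ C * N (fun j => (∑ i, |x i j| ^ p) ^ (1 / p))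

/-- The dual lattice norm on `ℝⁿ`. -/
def dualNR {n : ℕ} (N : (Fin n → ℝ) → ℝ) (y : Fin n → ℝ) : ℝ :=
  sSup {r : ℝ | ∃ x, N x ≤ 1 ∧ r = |∑ i, x i * y i|}

/-- The Calderón product norm `X₀^{1-θ}X₁^θ` on `ℝⁿ`. -/
def calNorm {n : ℕ} (θ : ℝ) (N₀ N₁ : (Fin n → ℝ) → ℝ) (f : Fin n → ℝ) : ℝ :=
  sInf {c : ℝ | ∃ g h : Fin n → ℝ, (∀ i, |f i| = |g i| ^ (1 - θ) * |h i| ^ θ) ∧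
    c = N₀ g ^ (1 - θ) * N₁ h ^ θ}

/-- The complex interpolation norm `[N₀,N₁]_θ`, computed via analytic functions
of finite type `z ↦ ∑ φᵢ(z) • vᵢ` on the strip (which, by density, gives the
complex interpolation norm on the intersection for couples with dense intersection). -/
def interpN {D : Type*} [AddCommGroup D] [Module ℂ D]
    (θ : ℝ) (N₀ N₁ : D → ℝ) (x : D) : ℝ :=
  sInf {c : ℝ | ∃ (m : ℕ) (φ : Fin m → ℂ → ℂ) (v : Fin m → D),
    (∀ i, ContinuousOn (φ i) Strip) ∧
    (∀ i, DifferentiableOn ℂ (φ i) OStrip) ∧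
    (∀ i, ∃ B : ℝ, ∀ z ∈ Strip, ‖φ i z‖ ≤ B) ∧
    (∑ i, φ i (θ : ℂ) • v i) = x ∧
    (∀ t : ℝ, N₀ (∑ i, φ i (Complex.I * t) • v i) ≤ c) ∧
    (∀ t : ℝ, N₁ (∑ i, φ i (1 + Complex.I * t) • v i) ≤ c)}

/-- Operator "norm" of a map with respect to given norm functions. -/
def opN {X Y : Type*} (NX : X → ℝ) (NY : Y → ℝ) (T : X → Y) : ℝ :=
  sSup {r : ℝ | ∃ x, NX x ≤ 1 ∧ r = NY (T x)}

/-- The Hilbert space `ℓ₂`. -/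
abbrev Hilb := lp (fun _ : ℕ => ℂ) 2

def hilbNorm (x : Hilb) : ℝ := ‖x‖

/-- `d_θ[M₀,M₁]`: the norm of the identity
`L(ℓ₂,[M₀,M₁]_θ) → [L(ℓ₂,M₀),L(ℓ₂,M₁)]_θ`. -/
def dTheta {V : Type*} [NormedAddCommGroup V] [NormedSpace ℂ V]
    (θ : ℝ) (N₀ N₁ : V → ℝ) : ℝ :=
  sSup {r : ℝ | ∃ T : Hilb →L[ℂ] V,
    opN hilbNorm (interpN θ N₀ N₁) ⇑T ≤ 1 ∧
    r = interpN θ (fun S : Hilb →L[ℂ] V => opN hilbNorm N₀ ⇑S)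
        (fun S : Hilb →L[ℂ] V => opN hilbNorm N₁ ⇑S) T}

/-- Rademacher average `(2^{-m} ∑_ε ‖∑ ±xᵢ‖²)`. -/
def radAvg {V : Type*} [AddCommGroup V] (N : V → ℝ) {m : ℕ} (x : Fin m → V) : ℝ :=
  ((2 : ℝ) ^ m)⁻¹ * ∑ ε : Fin m → Bool, N (∑ i, if ε i then x i else -x i) ^ 2

/-- `N` has (Rademacher) type 2 with constant `C`. -/
def Type2With {V : Type*} [AddCommGroup V] (N : V → ℝ) (C : ℝ) : Prop :=
  ∀ (m : ℕ) (x : Fin m → V), Real.sqrt (radAvg N x) ≤ C * Real.sqrt (∑ i, N (x i) ^ 2)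

/-- `N` has (Rademacher) cotype 2 with constant `C`. -/
def Cotype2With {V : Type*} [AddCommGroup V] (N : V → ℝ) (C : ℝ) : Prop :=
  ∀ (m : ℕ) (x : Fin m → V), Real.sqrt (∑ i, N (x i) ^ 2) ≤ C * Real.sqrt (radAvg N x)

/-- The injective tensor norm of two norm functions. -/
def injN {V W : Type*} [AddCommGroup V] [Module ℂ V] [AddCommGroup W] [Module ℂ W]
    (NV : V → ℝ) (NW : W → ℝ) (z : TensorProduct ℂ V W) : ℝ :=
  sSup {r : ℝ | ∃ (φ : V →ₗ[ℂ] ℂ) (ψ : W →ₗ[ℂ] ℂ),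
    (∀ x, ‖φ x‖ ≤ NV x) ∧ (∀ y, ‖ψ y‖ ≤ NW y) ∧
    r = ‖TensorProduct.lift (((LinearMap.mul ℂ ℂ).comp φ).compl₂ ψ) z‖}

/-- Dual norm on linear functionals. -/
def dualNC {V : Type*} [AddCommGroup V] [Module ℂ V] (N : V → ℝ) (φ : V →ₗ[ℂ] ℂ) : ℝ :=
  sSup {r : ℝ | ∃ x, N x ≤ 1 ∧ r = ‖φ x‖}

/-- The space of bounded linear functionals (dual space of the completion). -/
def BddDual {V : Type*} [AddCommGroup V] [Module ℂ V] (N : V → ℝ) :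
    Submodule ℂ (V →ₗ[ℂ] ℂ) where
  carrier := {φ | ∃ c : ℝ, ∀ x, ‖φ x‖ ≤ c * N x}
  zero_mem' := ⟨0, by simp⟩
  add_mem' := by
    rintro φ ψ ⟨c, hc⟩ ⟨d, hd⟩
    exact ⟨c + d, fun x => by
      have h1 := hc x; have h2 := hd x
      calc ‖(φ + ψ) x‖ = ‖φ x + ψ x‖ := by simp
        _ ≤ ‖φ x‖ + ‖ψ x‖ := norm_add_le _ _
        _ ≤ (c + d) * N x := by rw [add_mul]; exact add_le_add h1 h2⟩
  smul_mem' := by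
    rintro a φ ⟨c, hc⟩
    exact ⟨‖a‖ * c, fun x => by
      have : ‖(a • φ) x‖ = ‖a‖ * ‖φ x‖ := by simp [norm_smul]
      rw [this, mul_assoc]
      exact mul_le_mul_of_nonneg_left (hc x) (norm_nonneg a)⟩

/-- Strictly simple functions with values in `V`: the span of
`v`-valued indicators of finite-measure measurable sets. -/
def SimpleSub {Ω : Type*} [MeasurableSpace Ω] (μ : Measure Ω)
    (V : Type*) [AddCommGroup V] [Module ℂ V] : Submodule ℂ (Ω → V) :=
  Submodule.span ℂ {f | ∃ (s : Set Ω) (v : V), MeasurableSet s ∧ μ s < ⊤ ∧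
    f = s.indicator fun _ => v}

/-- A Banach function space over a measure `μ`, with `K`-valued functions. -/
structure BFS (Ω : Type*) [MeasurableSpace Ω] (μ : Measure Ω) (K : Type*) [RCLike K] where
  mem : (Ω → K) → Prop
  nrm : (Ω → K) → ℝ
  mem_zero : mem 0
  mem_add : ∀ f g, mem f → mem g → mem (f + g)
  mem_smul : ∀ (c : K) (f), mem f → mem (c • f)
  mem_meas : ∀ f, mem f → AEStronglyMeasurable f μ
  ideal : ∀ f g, AEStronglyMeasurable f μ → mem g →
    (∀ᵐ ω ∂μ, ‖f ω‖ ≤ ‖g ω‖) → mem f ∧ nrm f ≤ nrm g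
  nrm_nonneg : ∀ f, 0 ≤ nrm f
  nrm_eq_zero : ∀ f, mem f → nrm f = 0 → f =ᵐ[μ] 0
  nrm_add : ∀ f g, mem f → mem g → nrm (f + g) ≤ nrm f + nrm g
  nrm_smul : ∀ (c : K) (f), nrm (c • f) = ‖c‖ * nrm f
  mem_indicator : ∀ s : Set Ω, MeasurableSet s → μ s < ⊤ →
    mem (s.indicator fun _ => 1)
  complete : ∀ f : ℕ → Ω → K, (∀ k, mem (f k)) →
    (∀ ε : ℝ, 0 < ε → ∃ N : ℕ, ∀ p q, N ≤ p → N ≤ q → nrm (f p - f q) < ε) →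
    ∃ g, mem g ∧ ∀ ε : ℝ, 0 < ε → ∃ N : ℕ, ∀ p, N ≤ p → nrm (f p - g) < ε

variable {Ω : Type*} [MeasurableSpace Ω] {μ : Measure Ω} {K : Type*} [RCLike K]

/-- `X` is `r`-convex with constant `C`. -/
def BFS.RConvexWith (X : BFS Ω μ K) (r C : ℝ) : Prop :=
  ∀ (m : ℕ) (f : Fin m → Ω → K), (∀ i, X.mem (f i)) →
    X.mem (fun ω => ((((∑ i, ‖f i ω‖ ^ r) ^ (1 / r) : ℝ) : K))) ∧
    X.nrm (fun ω => ((((∑ i, ‖f i ω‖ ^ r) ^ (1 / r) : ℝ) : K))) ≤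
      C * (∑ i, X.nrm (f i) ^ r) ^ (1 / r)

/-- `X` is `r`-concave with constant `C`. -/
def BFS.RConcaveWith (X : BFS Ω μ K) (r C : ℝ) : Prop :=
  ∀ (m : ℕ) (f : Fin m → Ω → K), (∀ i, X.mem (f i)) →
    (∑ i, X.nrm (f i) ^ r) ^ (1 / r) ≤
      C * X.nrm (fun ω => ((((∑ i, ‖f i ω‖ ^ r) ^ (1 / r) : ℝ) : K)))

/-- The Calderón product membership for Banach function spaces. -/
def BFS.calMem {Ω' : Type*} [MeasurableSpace Ω'] {μ' : Measure Ω'} {K' : Type*}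
    [RCLike K'] (X₀ X₁ : BFS Ω' μ' K') (θ : ℝ) (f : Ω' → K') : Prop :=
  AEStronglyMeasurable f μ' ∧ ∃ g h, X₀.mem g ∧ X₁.mem h ∧
    ∀ᵐ ω ∂μ', ‖f ω‖ = ‖g ω‖ ^ (1 - θ) * ‖h ω‖ ^ θ

/-- The Calderón product norm for Banach function spaces. -/
def BFS.calNrm {Ω' : Type*} [MeasurableSpace Ω'] {μ' : Measure Ω'} {K' : Type*}
    [RCLike K'] (X₀ X₁ : BFS Ω' μ' K') (θ : ℝ) (f : Ω' → K') : ℝ :=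
  sInf {c : ℝ | ∃ g h, X₀.mem g ∧ X₁.mem h ∧
    (∀ᵐ ω ∂μ', ‖f ω‖ = ‖g ω‖ ^ (1 - θ) * ‖h ω‖ ^ θ) ∧
    c = X₀.nrm g ^ (1 - θ) * X₁.nrm h ^ θ}

lemma rpow_split {θ a : ℝ} (ha : 0 ≤ a) : a ^ (1 - θ) * a ^ θ = a := by
  rw [← Real.rpow_add' ha (by norm_num), sub_add_cancel, Real.rpow_one]

lemma rpow_mul_rpow_rpow {x y p q s : ℝ} (hx : 0 ≤ x) (hy : 0 ≤ y) :
    (x ^ p * y ^ q) ^ s = (x ^ s) ^ p * (y ^ s) ^ q := by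
  rw [Real.mul_rpow (Real.rpow_nonneg hx _) (Real.rpow_nonneg hy _),
    ← Real.rpow_mul hx, ← Real.rpow_mul hy, mul_comm p s, mul_comm q s,
    Real.rpow_mul hx, Real.rpow_mul hy]

lemma scale_eq {θ x G H : ℝ} (hx : 0 ≤ x) (hG : 0 ≤ G) (hH : 0 ≤ H)
    (hle : x ≤ G ^ (1 - θ) * H ^ θ) :
    (x / (G ^ (1 - θ) * H ^ θ) * G) ^ (1 - θ) * (x / (G ^ (1 - θ) * H ^ θ) * H) ^ θ = x := by
  have hE : 0 ≤ G ^ (1 - θ) * H ^ θ :=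
    mul_nonneg (Real.rpow_nonneg hG _) (Real.rpow_nonneg hH _)
  have ht : 0 ≤ x / (G ^ (1 - θ) * H ^ θ) := div_nonneg hx hE
  rw [Real.mul_rpow ht hG, Real.mul_rpow ht hH,
    show ∀ a b c d : ℝ, a * b * (c * d) = (a * c) * (b * d) by intros; ring,
    rpow_split ht]
  rcases eq_or_ne (G ^ (1 - θ) * H ^ θ) 0 with h0 | h0
  · have : x = 0 := le_antisymm (h0 ▸ hle) hx
    simp [h0, this]
  · exact div_mul_cancel₀ _ h0

lemma sum_rpow_le_rpow_sum {m : ℕ} {r : ℝ} (hr : 1 ≤ r) (a : Fin m → ℝ)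
    (ha : ∀ i, 0 ≤ a i) : ∑ i, a i ^ r ≤ (∑ i, a i) ^ r := by
  lift a to Fin m → NNReal using ha
  rw [← NNReal.coe_sum]
  push_cast [← NNReal.coe_rpow, ← NNReal.coe_sum]
  norm_cast
  classical
  induction (univ : Finset (Fin m)) using Finset.cons_induction with
  | empty => simp [NNReal.zero_rpow (by positivity : r ≠ 0)]
  | cons x s hx ih =>
    rw [Finset.sum_cons, Finset.sum_cons]
    calc a x ^ r + ∑ i ∈ s, a i ^ r ≤ a x ^ r + (∑ i ∈ s, a i) ^ r := by gcongr
      _ ≤ (a x + ∑ i ∈ s, a i) ^ r := NNReal.add_rpow_le_rpow_add _ _ hr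

lemma hoelder {m : ℕ} {θ : ℝ} (hθ : 0 < θ) (hθ1 : θ < 1) (b c : Fin m → ℝ)
    (hb : ∀ i, 0 ≤ b i) (hc : ∀ i, 0 ≤ c i) :
    ∑ i, b i ^ (1 - θ) * c i ^ θ ≤ (∑ i, b i) ^ (1 - θ) * (∑ i, c i) ^ θ := by
  have h1θ : (0:ℝ) < 1 - θ := by linarith
  have hpq : ((1-θ)⁻¹ : ℝ).HolderConjugate θ⁻¹ := by
    rw [Real.holderConjugate_iff]
    constructor
    · rw [lt_inv_comm₀ one_pos h1θ]; simpa using hθ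
    · rw [inv_inv, inv_inv]; ring
  have := Real.inner_le_Lp_mul_Lq_of_nonneg univ hpq
    (f := fun i => b i ^ (1-θ)) (g := fun i => c i ^ θ)
    (fun i _ => Real.rpow_nonneg (hb i) _) (fun i _ => Real.rpow_nonneg (hc i) _)
  simpa [← Real.rpow_natCast, ← Real.rpow_mul (hb _), ← Real.rpow_mul (hc _),
    mul_inv_cancel₀ h1θ.ne', mul_inv_cancel₀ hθ.ne', Real.rpow_one, one_div, inv_inv] using this

section Main
variable {Ω' : Type*} [MeasurableSpace Ω'] {ν : Measure Ω'}

lemma calSet_nonneg (X₀ X₁ : BFS Ω' ν ℝ) {θ : ℝ} (hθ : 0 < θ) (hθ1 : θ < 1) (φ : Ω' → ℝ) :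
    ∀ c ∈ {c : ℝ | ∃ g h, X₀.mem g ∧ X₁.mem h ∧
      (∀ᵐ ω ∂ν, ‖φ ω‖ = ‖g ω‖ ^ (1 - θ) * ‖h ω‖ ^ θ) ∧
      c = X₀.nrm g ^ (1 - θ) * X₁.nrm h ^ θ}, 0 ≤ c := by
  rintro c ⟨g, h, -, -, -, rfl⟩
  exact mul_nonneg (Real.rpow_nonneg (X₀.nrm_nonneg g) _) (Real.rpow_nonneg (X₁.nrm_nonneg h) _)

lemma calNrm_nonneg (X₀ X₁ : BFS Ω' ν ℝ) {θ : ℝ} (hθ : 0 < θ) (hθ1 : θ < 1) (φ : Ω' → ℝ) :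
    0 ≤ BFS.calNrm X₀ X₁ θ φ :=
  Real.sInf_nonneg (calSet_nonneg X₀ X₁ hθ hθ1 φ)

lemma calNrm_le_of_rep (X₀ X₁ : BFS Ω' ν ℝ) {θ : ℝ} (hθ : 0 < θ) (hθ1 : θ < 1) (φ g h : Ω' → ℝ)
    (hg : X₀.mem g) (hh : X₁.mem h)
    (hrep : ∀ᵐ ω ∂ν, ‖φ ω‖ = ‖g ω‖ ^ (1 - θ) * ‖h ω‖ ^ θ) :
    BFS.calNrm X₀ X₁ θ φ ≤ X₀.nrm g ^ (1 - θ) * X₁.nrm h ^ θ :=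
  csInf_le ⟨0, calSet_nonneg X₀ X₁ hθ hθ1 φ⟩ ⟨g, h, hg, hh, hrep, rfl⟩

lemma rep_bound (X₀ X₁ : BFS Ω' ν ℝ)
    {r : ℝ} (hr : 1 ≤ r) {C₀ C₁ : ℝ} (hC₀ : 0 ≤ C₀) (hC₁ : 0 ≤ C₁)
    (h₀ : X₀.RConcaveWith r C₀) (h₁ : X₁.RConcaveWith r C₁)
    {θ : ℝ} (hθ : 0 < θ) (hθ1 : θ < 1)
    {m : ℕ} {f : Fin m → Ω' → ℝ} (hf : ∀ i, AEStronglyMeasurable (f i) ν)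
    {g h : Ω' → ℝ} (hg : X₀.mem g) (hh : X₁.mem h)
    (hrep : ∀ᵐ ω ∂ν, ‖(∑ i, ‖f i ω‖ ^ r) ^ (1 / r)‖ = ‖g ω‖ ^ (1 - θ) * ‖h ω‖ ^ θ) :
    (∑ i, BFS.calNrm X₀ X₁ θ (f i) ^ r) ^ (1 / r) ≤
      (C₀ ^ (1 - θ) * C₁ ^ θ) * (X₀.nrm g ^ (1 - θ) * X₁.nrm h ^ θ) := by
  have hr0 : (0:ℝ) < r := lt_of_lt_of_le one_pos hr
  have hrne : r ≠ 0 := hr0.ne'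
  have h1r : (0:ℝ) < 1 / r := by positivity
  have h1θ : (0:ℝ) ≤ 1 - θ := by linarith
  set F : Ω' → ℝ := fun ω => (∑ i, ‖f i ω‖ ^ r) ^ (1 / r) with hF
  have hFnn : ∀ ω, 0 ≤ F ω := fun ω =>
    Real.rpow_nonneg (Finset.sum_nonneg fun i _ => Real.rpow_nonneg (norm_nonneg _) _) _
  have hfF : ∀ i ω, ‖f i ω‖ ≤ F ω := by
    intro i ω
    have e : ‖f i ω‖ = (‖f i ω‖ ^ r) ^ (1 / r) := by
      rw [one_div, Real.rpow_rpow_inv (norm_nonneg _) hrne]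
    rw [e]
    exact Real.rpow_le_rpow (Real.rpow_nonneg (norm_nonneg _) _)
      (Finset.single_le_sum (f := fun j => ‖f j ω‖ ^ r)
        (fun j _ => Real.rpow_nonneg (norm_nonneg _) _) (Finset.mem_univ i))
      h1r.le
  set a : Fin m → Ω' → ℝ := fun i ω => ‖f i ω‖ / F ω with ha
  have ha0 : ∀ i ω, 0 ≤ a i ω := fun i ω => div_nonneg (norm_nonneg _) (hFnn ω)
  have ha1 : ∀ i ω, a i ω ≤ 1 := fun i ω => div_le_one_of_le₀ (hfF i ω) (hFnn ω)
  set gi : Fin m → Ω' → ℝ := fun i ω => a i ω * |g ω| with hgi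
  set hi : Fin m → Ω' → ℝ := fun i ω => a i ω * |h ω| with hhi
  -- measurability
  have hmf : ∀ i, AEMeasurable (f i) ν := fun i => (hf i).aemeasurable
  have hmF : AEMeasurable F ν := by
    have h1 : AEMeasurable (fun ω => ∑ i, ‖f i ω‖ ^ r) ν :=
      Finset.aemeasurable_fun_sum _ fun i _ => by fun_prop
    rw [hF]; fun_prop
  have hmg : AEMeasurable g ν := (X₀.mem_meas g hg).aemeasurable
  have hmh : AEMeasurable h ν := (X₁.mem_meas h hh).aemeasurable
  have hmgi : ∀ i, AEStronglyMeasurable (gi i) ν := fun i => by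
    rw [hgi]
    have := hmf i
    apply aestronglyMeasurable_iff_aemeasurable.mpr
    fun_prop
  have hmhi : ∀ i, AEStronglyMeasurable (hi i) ν := fun i => by
    rw [hhi]
    have := hmf i
    apply aestronglyMeasurable_iff_aemeasurable.mpr
    fun_prop
  -- pointwise norms
  have hgi_abs : ∀ i ω, ‖gi i ω‖ = a i ω * |g ω| := fun i ω => by
    rw [Real.norm_eq_abs, _root_.abs_of_nonneg (mul_nonneg (ha0 i ω) (abs_nonneg _))]
  have hhi_abs : ∀ i ω, ‖hi i ω‖ = a i ω * |h ω| := fun i ω => by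
    rw [Real.norm_eq_abs, _root_.abs_of_nonneg (mul_nonneg (ha0 i ω) (abs_nonneg _))]
  have hgi_le : ∀ i ω, ‖gi i ω‖ ≤ ‖g ω‖ := fun i ω => by
    rw [hgi_abs, Real.norm_eq_abs]
    calc a i ω * |g ω| ≤ 1 * |g ω| :=
          mul_le_mul_of_nonneg_right (ha1 i ω) (abs_nonneg _)
      _ = |g ω| := one_mul _
  have hhi_le : ∀ i ω, ‖hi i ω‖ ≤ ‖h ω‖ := fun i ω => by
    rw [hhi_abs, Real.norm_eq_abs]
    calc a i ω * |h ω| ≤ 1 * |h ω| :=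
          mul_le_mul_of_nonneg_right (ha1 i ω) (abs_nonneg _)
      _ = |h ω| := one_mul _
  -- membership
  have hgimem : ∀ i, X₀.mem (gi i) := fun i =>
    (X₀.ideal (gi i) g (hmgi i) hg (Filter.Eventually.of_forall (hgi_le i))).1
  have hhimem : ∀ i, X₁.mem (hi i) := fun i =>
    (X₁.ideal (hi i) h (hmhi i) hh (Filter.Eventually.of_forall (hhi_le i))).1
  -- the ℓʳ-sum of the gi is dominated by g
  set G : Ω' → ℝ := fun ω => (∑ i, ‖gi i ω‖ ^ r) ^ (1 / r) with hG
  set H : Ω' → ℝ := fun ω => (∑ i, ‖hi i ω‖ ^ r) ^ (1 / r) with hH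
  have hsum_a : ∀ ω, ∑ i, a i ω ^ r ≤ 1 := by
    intro ω
    have hFr : F ω ^ r = ∑ i, ‖f i ω‖ ^ r := by
      rw [hF, one_div, Real.rpow_inv_rpow
        (Finset.sum_nonneg fun i _ => Real.rpow_nonneg (norm_nonneg _) _) hrne]
    calc ∑ i, a i ω ^ r = (∑ i, ‖f i ω‖ ^ r) / F ω ^ r := by
          rw [Finset.sum_div]
          refine Finset.sum_congr rfl fun i _ => ?_
          simp only [ha]
          exact Real.div_rpow (norm_nonneg _) (hFnn ω) r
      _ = (∑ i, ‖f i ω‖ ^ r) / (∑ i, ‖f i ω‖ ^ r) := by rw [hFr]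
      _ ≤ 1 := div_self_le_one _
  have hGnn : ∀ ω, 0 ≤ G ω := fun ω => Real.rpow_nonneg
    (Finset.sum_nonneg fun i _ => Real.rpow_nonneg (norm_nonneg _) _) _
  have hHnn : ∀ ω, 0 ≤ H ω := fun ω => Real.rpow_nonneg
    (Finset.sum_nonneg fun i _ => Real.rpow_nonneg (norm_nonneg _) _) _
  have hGle : ∀ ω, G ω ≤ ‖g ω‖ := by
    intro ω
    have e1 : ∑ i, ‖gi i ω‖ ^ r = (∑ i, a i ω ^ r) * |g ω| ^ r := by
      rw [Finset.sum_mul]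
      exact Finset.sum_congr rfl fun i _ => by
        rw [hgi_abs, Real.mul_rpow (ha0 i ω) (abs_nonneg _)]
    calc G ω ≤ (|g ω| ^ r) ^ (1 / r) := by
          apply Real.rpow_le_rpow
            (Finset.sum_nonneg fun i _ => Real.rpow_nonneg (norm_nonneg _) _) _ h1r.le
          rw [e1]
          calc (∑ i, a i ω ^ r) * |g ω| ^ r ≤ 1 * |g ω| ^ r :=
                mul_le_mul_of_nonneg_right (hsum_a ω) (Real.rpow_nonneg (abs_nonneg _) _)
            _ = |g ω| ^ r := one_mul _
      _ = ‖g ω‖ := by rw [one_div, Real.rpow_rpow_inv (abs_nonneg _) hrne, Real.norm_eq_abs]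
  have hHle : ∀ ω, H ω ≤ ‖h ω‖ := by
    intro ω
    have e1 : ∑ i, ‖hi i ω‖ ^ r = (∑ i, a i ω ^ r) * |h ω| ^ r := by
      rw [Finset.sum_mul]
      exact Finset.sum_congr rfl fun i _ => by
        rw [hhi_abs, Real.mul_rpow (ha0 i ω) (abs_nonneg _)]
    calc H ω ≤ (|h ω| ^ r) ^ (1 / r) := by
          apply Real.rpow_le_rpow
            (Finset.sum_nonneg fun i _ => Real.rpow_nonneg (norm_nonneg _) _) _ h1r.le
          rw [e1]
          calc (∑ i, a i ω ^ r) * |h ω| ^ r ≤ 1 * |h ω| ^ r :=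
                mul_le_mul_of_nonneg_right (hsum_a ω) (Real.rpow_nonneg (abs_nonneg _) _)
            _ = |h ω| ^ r := one_mul _
      _ = ‖h ω‖ := by rw [one_div, Real.rpow_rpow_inv (abs_nonneg _) hrne, Real.norm_eq_abs]
  -- r-concavity applied
  have hS₀ : (∑ i, X₀.nrm (gi i) ^ r) ^ (1 / r) ≤ C₀ * X₀.nrm G := h₀ m gi hgimem
  have hS₁ : (∑ i, X₁.nrm (hi i) ^ r) ^ (1 / r) ≤ C₁ * X₁.nrm H := h₁ m hi hhimem
  have hGm : AEStronglyMeasurable G ν := by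
    rw [hG]
    have h1 : ∀ i, AEMeasurable (gi i) ν := fun i => (hmgi i).aemeasurable
    have h2 : AEMeasurable (fun ω => ∑ i, ‖gi i ω‖ ^ r) ν :=
      Finset.aemeasurable_fun_sum _ fun i _ => by have := h1 i; fun_prop
    apply aestronglyMeasurable_iff_aemeasurable.mpr
    fun_prop
  have hHm : AEStronglyMeasurable H ν := by
    rw [hH]
    have h1 : ∀ i, AEMeasurable (hi i) ν := fun i => (hmhi i).aemeasurable
    have h2 : AEMeasurable (fun ω => ∑ i, ‖hi i ω‖ ^ r) ν :=
      Finset.aemeasurable_fun_sum _ fun i _ => by have := h1 i; fun_prop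
    apply aestronglyMeasurable_iff_aemeasurable.mpr
    fun_prop
  have hGN : X₀.nrm G ≤ X₀.nrm g :=
    (X₀.ideal G g hGm hg (Filter.Eventually.of_forall fun ω => by
      rw [Real.norm_of_nonneg (hGnn ω)]; exact hGle ω)).2
  have hHN : X₁.nrm H ≤ X₁.nrm h :=
    (X₁.ideal H h hHm hh (Filter.Eventually.of_forall fun ω => by
      rw [Real.norm_of_nonneg (hHnn ω)]; exact hHle ω)).2
  have key₀ : (∑ i, X₀.nrm (gi i) ^ r) ^ (1 / r) ≤ C₀ * X₀.nrm g :=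
    hS₀.trans (mul_le_mul_of_nonneg_left hGN hC₀)
  have key₁ : (∑ i, X₁.nrm (hi i) ^ r) ^ (1 / r) ≤ C₁ * X₁.nrm h :=
    hS₁.trans (mul_le_mul_of_nonneg_left hHN hC₁)
  -- a.e. representation of each f i
  have hrepi : ∀ i, ∀ᵐ ω ∂ν, ‖f i ω‖ = ‖gi i ω‖ ^ (1 - θ) * ‖hi i ω‖ ^ θ := by
    intro i
    filter_upwards [hrep] with ω hω
    have hFr : F ω = |g ω| ^ (1 - θ) * |h ω| ^ θ := by
      rw [← Real.norm_of_nonneg (hFnn ω), hω, Real.norm_eq_abs, Real.norm_eq_abs]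
    have hfFi : ‖f i ω‖ ≤ |g ω| ^ (1 - θ) * |h ω| ^ θ := hFr ▸ hfF i ω
    rw [hgi_abs, hhi_abs]
    have : a i ω = ‖f i ω‖ / (|g ω| ^ (1 - θ) * |h ω| ^ θ) := by
      simp only [ha]; rw [hFr]
    rw [this]
    exact (scale_eq (norm_nonneg _) (abs_nonneg _) (abs_nonneg _) hfFi).symm
  -- combine
  have hcal_le : ∀ i, BFS.calNrm X₀ X₁ θ (f i) ≤ X₀.nrm (gi i) ^ (1 - θ) * X₁.nrm (hi i) ^ θ :=
    fun i => calNrm_le_of_rep X₀ X₁ hθ hθ1 (f i) (gi i) (hi i) (hgimem i) (hhimem i) (hrepi i)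
  have hS₀nn : (0:ℝ) ≤ ∑ i, X₀.nrm (gi i) ^ r :=
    Finset.sum_nonneg fun i _ => Real.rpow_nonneg (X₀.nrm_nonneg _) _
  have hS₁nn : (0:ℝ) ≤ ∑ i, X₁.nrm (hi i) ^ r :=
    Finset.sum_nonneg fun i _ => Real.rpow_nonneg (X₁.nrm_nonneg _) _
  have step1 : ∑ i, BFS.calNrm X₀ X₁ θ (f i) ^ r ≤
      (∑ i, X₀.nrm (gi i) ^ r) ^ (1 - θ) * (∑ i, X₁.nrm (hi i) ^ r) ^ θ := by
    calc ∑ i, BFS.calNrm X₀ X₁ θ (f i) ^ r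
        ≤ ∑ i, (X₀.nrm (gi i) ^ r) ^ (1 - θ) * (X₁.nrm (hi i) ^ r) ^ θ := by
          apply Finset.sum_le_sum
          intro i _
          calc BFS.calNrm X₀ X₁ θ (f i) ^ r
              ≤ (X₀.nrm (gi i) ^ (1 - θ) * X₁.nrm (hi i) ^ θ) ^ r :=
                Real.rpow_le_rpow (calNrm_nonneg X₀ X₁ hθ hθ1 (f i)) (hcal_le i) hr0.le
            _ = (X₀.nrm (gi i) ^ r) ^ (1 - θ) * (X₁.nrm (hi i) ^ r) ^ θ :=
                rpow_mul_rpow_rpow (X₀.nrm_nonneg _) (X₁.nrm_nonneg _)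
      _ ≤ _ := hoelder hθ hθ1 _ _ (fun i => Real.rpow_nonneg (X₀.nrm_nonneg _) _)
            (fun i => Real.rpow_nonneg (X₁.nrm_nonneg _) _)
  calc (∑ i, BFS.calNrm X₀ X₁ θ (f i) ^ r) ^ (1 / r)
      ≤ ((∑ i, X₀.nrm (gi i) ^ r) ^ (1 - θ) * (∑ i, X₁.nrm (hi i) ^ r) ^ θ) ^ (1 / r) :=
        Real.rpow_le_rpow (Finset.sum_nonneg fun i _ =>
          Real.rpow_nonneg (calNrm_nonneg X₀ X₁ hθ hθ1 (f i)) _) step1 h1r.le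
    _ = ((∑ i, X₀.nrm (gi i) ^ r) ^ (1 / r)) ^ (1 - θ) *
          ((∑ i, X₁.nrm (hi i) ^ r) ^ (1 / r)) ^ θ := rpow_mul_rpow_rpow hS₀nn hS₁nn
    _ ≤ (C₀ * X₀.nrm g) ^ (1 - θ) * (C₁ * X₁.nrm h) ^ θ := by
        apply mul_le_mul
        · exact Real.rpow_le_rpow (Real.rpow_nonneg hS₀nn _) key₀ h1θ
        · exact Real.rpow_le_rpow (Real.rpow_nonneg hS₁nn _) key₁ hθ.le
        · exact Real.rpow_nonneg (Real.rpow_nonneg hS₁nn _) _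
        · exact Real.rpow_nonneg (mul_nonneg hC₀ (X₀.nrm_nonneg _)) _
    _ = (C₀ ^ (1 - θ) * C₁ ^ θ) * (X₀.nrm g ^ (1 - θ) * X₁.nrm h ^ θ) := by
        rw [Real.mul_rpow hC₀ (X₀.nrm_nonneg _), Real.mul_rpow hC₁ (X₁.nrm_nonneg _)]
        ring

lemma mem_abs (X : BFS Ω' ν ℝ) {φ : Ω' → ℝ} (h : X.mem φ) : X.mem (fun ω => |φ ω|) := by
  have hm : AEMeasurable φ ν := (X.mem_meas φ h).aemeasurable
  refine (X.ideal _ φ (aestronglyMeasurable_iff_aemeasurable.mpr (by fun_prop)) h ?_).1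
  filter_upwards with ω
  simp [Real.norm_eq_abs, abs_abs]

lemma mem_sum (X : BFS Ω' ν ℝ) {m : ℕ} (φ : Fin m → Ω' → ℝ) (h : ∀ i, X.mem (φ i)) :
    X.mem (fun ω => ∑ i, φ i ω) := by
  classical
  have key : ∀ s : Finset (Fin m), X.mem (fun ω => ∑ i ∈ s, φ i ω) := by
    intro s
    induction s using Finset.cons_induction with
    | empty => simp only [Finset.sum_empty]; exact X.mem_zero
    | cons x s hx ih =>
      have h2 := X.mem_add (φ x) _ (h x) ih
      have e : (φ x + fun ω => ∑ i ∈ s, φ i ω) = fun ω => ∑ i ∈ Finset.cons x s hx, φ i ω := by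
        funext ω; rw [Finset.sum_cons]; rfl
      rwa [e] at h2
  exact key univ

lemma cal_rep_exists (X₀ X₁ : BFS Ω' ν ℝ) {θ r : ℝ} (hθ : 0 < θ) (hθ1 : θ < 1) (hr : 1 ≤ r)
    {m : ℕ} {f : Fin m → Ω' → ℝ} (hf : ∀ i, BFS.calMem X₀ X₁ θ (f i)) :
    ∃ G H, X₀.mem G ∧ X₁.mem H ∧
      ∀ᵐ ω ∂ν, ‖(∑ i, ‖f i ω‖ ^ r) ^ (1 / r)‖ = ‖G ω‖ ^ (1 - θ) * ‖H ω‖ ^ θ := by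
  have hr0 : (0:ℝ) < r := lt_of_lt_of_le one_pos hr
  have hrne : r ≠ 0 := hr0.ne'
  have h1r : (0:ℝ) < 1 / r := by positivity
  choose g' h' hg' hh' hrep' using fun i => (hf i).2
  set Gs : Ω' → ℝ := fun ω => ∑ i, |g' i ω| with hGs
  set Hs : Ω' → ℝ := fun ω => ∑ i, |h' i ω| with hHs
  have hGsm : X₀.mem Gs := mem_sum X₀ _ (fun i => mem_abs X₀ (hg' i))
  have hHsm : X₁.mem Hs := mem_sum X₁ _ (fun i => mem_abs X₁ (hh' i))
  have hGs0 : ∀ ω, 0 ≤ Gs ω := fun ω => Finset.sum_nonneg fun i _ => abs_nonneg _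
  have hHs0 : ∀ ω, 0 ≤ Hs ω := fun ω => Finset.sum_nonneg fun i _ => abs_nonneg _
  set F : Ω' → ℝ := fun ω => (∑ i, ‖f i ω‖ ^ r) ^ (1 / r) with hF
  have hFnn : ∀ ω, 0 ≤ F ω := fun ω =>
    Real.rpow_nonneg (Finset.sum_nonneg fun i _ => Real.rpow_nonneg (norm_nonneg _) _) _
  set E : Ω' → ℝ := fun ω => Gs ω ^ (1 - θ) * Hs ω ^ θ with hE
  have hE0 : ∀ ω, 0 ≤ E ω := fun ω =>
    mul_nonneg (Real.rpow_nonneg (hGs0 ω) _) (Real.rpow_nonneg (hHs0 ω) _)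
  set t : Ω' → ℝ := fun ω => F ω / E ω with ht
  have ht0 : ∀ ω, 0 ≤ t ω := fun ω => div_nonneg (hFnn ω) (hE0 ω)
  have hFle : ∀ᵐ ω ∂ν, F ω ≤ E ω := by
    filter_upwards [(MeasureTheory.ae_all_iff).mpr hrep'] with ω hω
    calc F ω ≤ ((∑ i, ‖f i ω‖) ^ r) ^ (1 / r) :=
          Real.rpow_le_rpow (Finset.sum_nonneg fun i _ => Real.rpow_nonneg (norm_nonneg _) _)
            (sum_rpow_le_rpow_sum hr _ (fun i => norm_nonneg _)) h1r.le
      _ = ∑ i, ‖f i ω‖ := by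
          rw [one_div, Real.rpow_rpow_inv (Finset.sum_nonneg fun i _ => norm_nonneg _) hrne]
      _ = ∑ i, |g' i ω| ^ (1 - θ) * |h' i ω| ^ θ := Finset.sum_congr rfl fun i _ => by
          rw [hω i, Real.norm_eq_abs, Real.norm_eq_abs]
      _ ≤ E ω := hoelder hθ hθ1 _ _ (fun i => abs_nonneg _) (fun i => abs_nonneg _)
  have ht1 : ∀ᵐ ω ∂ν, t ω ≤ 1 := by
    filter_upwards [hFle] with ω hω
    exact div_le_one_of_le₀ hω (hE0 ω)
  -- measurability
  have hmg' : ∀ i, AEMeasurable (g' i) ν := fun i => (X₀.mem_meas _ (hg' i)).aemeasurable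
  have hmh' : ∀ i, AEMeasurable (h' i) ν := fun i => (X₁.mem_meas _ (hh' i)).aemeasurable
  have hmf : ∀ i, AEMeasurable (f i) ν := fun i => (hf i).1.aemeasurable
  have hmGs : AEMeasurable Gs ν := Finset.aemeasurable_fun_sum _ fun i _ => by
    have := hmg' i; fun_prop
  have hmHs : AEMeasurable Hs ν := Finset.aemeasurable_fun_sum _ fun i _ => by
    have := hmh' i; fun_prop
  have hmF : AEMeasurable F ν := by
    have h1 : AEMeasurable (fun ω => ∑ i, ‖f i ω‖ ^ r) ν :=
      Finset.aemeasurable_fun_sum _ fun i _ => by have := hmf i; fun_prop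
    rw [hF]; fun_prop
  have hmE : AEMeasurable E ν := by rw [hE]; fun_prop
  have hmt : AEMeasurable t ν := by rw [ht]; fun_prop
  have hmb : AEStronglyMeasurable (fun ω => t ω * Gs ω) ν :=
    aestronglyMeasurable_iff_aemeasurable.mpr (by fun_prop)
  have hmc : AEStronglyMeasurable (fun ω => t ω * Hs ω) ν :=
    aestronglyMeasurable_iff_aemeasurable.mpr (by fun_prop)
  have hbm : X₀.mem (fun ω => t ω * Gs ω) := by
    refine (X₀.ideal _ Gs hmb hGsm ?_).1
    filter_upwards [ht1] with ω hω
    rw [Real.norm_eq_abs, Real.norm_eq_abs, _root_.abs_of_nonneg (mul_nonneg (ht0 ω) (hGs0 ω)),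
      _root_.abs_of_nonneg (hGs0 ω)]
    calc t ω * Gs ω ≤ 1 * Gs ω := mul_le_mul_of_nonneg_right hω (hGs0 ω)
      _ = Gs ω := one_mul _
  have hcm : X₁.mem (fun ω => t ω * Hs ω) := by
    refine (X₁.ideal _ Hs hmc hHsm ?_).1
    filter_upwards [ht1] with ω hω
    rw [Real.norm_eq_abs, Real.norm_eq_abs, _root_.abs_of_nonneg (mul_nonneg (ht0 ω) (hHs0 ω)),
      _root_.abs_of_nonneg (hHs0 ω)]
    calc t ω * Hs ω ≤ 1 * Hs ω := mul_le_mul_of_nonneg_right hω (hHs0 ω)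
      _ = Hs ω := one_mul _
  refine ⟨_, _, hbm, hcm, ?_⟩
  filter_upwards [hFle] with ω hω
  rw [Real.norm_of_nonneg (hFnn ω), Real.norm_eq_abs, Real.norm_eq_abs,
    _root_.abs_of_nonneg (mul_nonneg (ht0 ω) (hGs0 ω)), _root_.abs_of_nonneg (mul_nonneg (ht0 ω) (hHs0 ω))]
  exact (scale_eq (hFnn ω) (hGs0 ω) (hHs0 ω) hω).symm

lemma calNrm_degenerate₀ (X₀ X₁ : BFS Ω' ν ℝ) {θ : ℝ} (hθ : 0 < θ) (hθ1 : θ < 1)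
    (hd : ∀ φ, X₀.mem φ → X₀.nrm φ = 0) (φ : Ω' → ℝ) : BFS.calNrm X₀ X₁ θ φ = 0 := by
  have hsub : {c : ℝ | ∃ g h, X₀.mem g ∧ X₁.mem h ∧
      (∀ᵐ ω ∂ν, ‖φ ω‖ = ‖g ω‖ ^ (1 - θ) * ‖h ω‖ ^ θ) ∧
      c = X₀.nrm g ^ (1 - θ) * X₁.nrm h ^ θ} ⊆ {0} := by
    rintro c ⟨g, h, hg, -, -, rfl⟩
    simp [hd g hg, Real.zero_rpow (show (1:ℝ) - θ ≠ 0 by linarith)]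
  show sInf _ = 0
  rcases Set.eq_empty_or_nonempty {c : ℝ | ∃ g h, X₀.mem g ∧ X₁.mem h ∧
      (∀ᵐ ω ∂ν, ‖φ ω‖ = ‖g ω‖ ^ (1 - θ) * ‖h ω‖ ^ θ) ∧
      c = X₀.nrm g ^ (1 - θ) * X₁.nrm h ^ θ} with hS | hS
  · rw [hS, Real.sInf_empty]
  · rw [(Set.Nonempty.subset_singleton_iff hS).mp hsub, csInf_singleton]

lemma calNrm_degenerate₁ (X₀ X₁ : BFS Ω' ν ℝ) {θ : ℝ} (hθ : 0 < θ) (hθ1 : θ < 1)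
    (hd : ∀ φ, X₁.mem φ → X₁.nrm φ = 0) (φ : Ω' → ℝ) : BFS.calNrm X₀ X₁ θ φ = 0 := by
  have hsub : {c : ℝ | ∃ g h, X₀.mem g ∧ X₁.mem h ∧
      (∀ᵐ ω ∂ν, ‖φ ω‖ = ‖g ω‖ ^ (1 - θ) * ‖h ω‖ ^ θ) ∧
      c = X₀.nrm g ^ (1 - θ) * X₁.nrm h ^ θ} ⊆ {0} := by
    rintro c ⟨g, h, -, hh, -, rfl⟩
    simp [hd h hh, Real.zero_rpow hθ.ne']
  show sInf _ = 0
  rcases Set.eq_empty_or_nonempty {c : ℝ | ∃ g h, X₀.mem g ∧ X₁.mem h ∧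
      (∀ᵐ ω ∂ν, ‖φ ω‖ = ‖g ω‖ ^ (1 - θ) * ‖h ω‖ ^ θ) ∧
      c = X₀.nrm g ^ (1 - θ) * X₁.nrm h ^ θ} with hS | hS
  · rw [hS, Real.sInf_empty]
  · rw [(Set.Nonempty.subset_singleton_iff hS).mp hsub, csInf_singleton]

end Main

/-- the Calderón product of two `r`-concave Banach function spaces
is `r`-concave with constant `≤ M_(r)(X₀)^{1-θ}·M_(r)(X₁)^θ`. -/
theorem statement6 {Ω' : Type*} [MeasurableSpace Ω'] (μ : Measure Ω')
    [SigmaFinite μ] (hμc : μ.IsComplete) (X₀ X₁ : BFS Ω' μ ℝ)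
    (r : ℝ) (hr : 1 ≤ r) (C₀ C₁ : ℝ)
    (h₀ : X₀.RConcaveWith r C₀) (h₁ : X₁.RConcaveWith r C₁)
    (θ : ℝ) (hθ : 0 < θ) (hθ1 : θ < 1)
    (m : ℕ) (f : Fin m → Ω' → ℝ) (hf : ∀ i, BFS.calMem X₀ X₁ θ (f i)) :
    (∑ i, BFS.calNrm X₀ X₁ θ (f i) ^ r) ^ (1 / r) ≤
      (C₀ ^ (1 - θ) * C₁ ^ θ) *
        BFS.calNrm X₀ X₁ θ (fun ω => (∑ i, ‖f i ω‖ ^ r) ^ (1 / r)) := by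
  have hr0 : (0:ℝ) < r := lt_of_lt_of_le one_pos hr
  have hrne : r ≠ 0 := hr0.ne'
  have h1rne : 1 / r ≠ 0 := by positivity
  by_cases hd₀ : ∀ φ, X₀.mem φ → X₀.nrm φ = 0
  · have hz : ∀ i, BFS.calNrm X₀ X₁ θ (f i) = 0 := fun i =>
      calNrm_degenerate₀ X₀ X₁ hθ hθ1 hd₀ (f i)
    rw [calNrm_degenerate₀ X₀ X₁ hθ hθ1 hd₀ _, mul_zero]
    simp only [hz]
    rw [Real.zero_rpow hrne, Finset.sum_const, smul_zero, Real.zero_rpow h1rne]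
  by_cases hd₁ : ∀ φ, X₁.mem φ → X₁.nrm φ = 0
  · have hz : ∀ i, BFS.calNrm X₀ X₁ θ (f i) = 0 := fun i =>
      calNrm_degenerate₁ X₀ X₁ hθ hθ1 hd₁ (f i)
    rw [calNrm_degenerate₁ X₀ X₁ hθ hθ1 hd₁ _, mul_zero]
    simp only [hz]
    rw [Real.zero_rpow hrne, Finset.sum_const, smul_zero, Real.zero_rpow h1rne]
  push_neg at hd₀ hd₁
  obtain ⟨φ₀, hφ₀m, hφ₀⟩ := hd₀
  obtain ⟨φ₁, hφ₁m, hφ₁⟩ := hd₁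
  have hφ₀p : 0 < X₀.nrm φ₀ := lt_of_le_of_ne (X₀.nrm_nonneg φ₀) (Ne.symm hφ₀)
  have hφ₁p : 0 < X₁.nrm φ₁ := lt_of_le_of_ne (X₁.nrm_nonneg φ₁) (Ne.symm hφ₁)
  have hC₀ : 0 < C₀ := by
    have h2 := h₀ 1 (fun _ => φ₀) (fun _ => hφ₀m)
    rw [Fin.sum_univ_one] at h2
    have hpos : (0:ℝ) < (X₀.nrm φ₀ ^ r) ^ (1 / r) :=
      Real.rpow_pos_of_pos (Real.rpow_pos_of_pos hφ₀p r) _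
    by_contra hc
    push_neg at hc
    exact absurd (lt_of_lt_of_le hpos h2)
      (not_lt.mpr (mul_nonpos_iff.mpr (Or.inr ⟨hc, X₀.nrm_nonneg _⟩)))
  have hC₁ : 0 < C₁ := by
    have h2 := h₁ 1 (fun _ => φ₁) (fun _ => hφ₁m)
    rw [Fin.sum_univ_one] at h2
    have hpos : (0:ℝ) < (X₁.nrm φ₁ ^ r) ^ (1 / r) :=
      Real.rpow_pos_of_pos (Real.rpow_pos_of_pos hφ₁p r) _
    by_contra hc
    push_neg at hc
    exact absurd (lt_of_lt_of_le hpos h2)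
      (not_lt.mpr (mul_nonpos_iff.mpr (Or.inr ⟨hc, X₁.nrm_nonneg _⟩)))
  have hC : (0:ℝ) < C₀ ^ (1 - θ) * C₁ ^ θ :=
    mul_pos (Real.rpow_pos_of_pos hC₀ _) (Real.rpow_pos_of_pos hC₁ _)
  obtain ⟨G, H, hGm, hHm, hGH⟩ := cal_rep_exists X₀ X₁ hθ hθ1 hr hf
  set L : ℝ := (∑ i, BFS.calNrm X₀ X₁ θ (f i) ^ r) ^ (1 / r) with hL
  have hdiv : L / (C₀ ^ (1 - θ) * C₁ ^ θ) ≤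
      BFS.calNrm X₀ X₁ θ (fun ω => (∑ i, ‖f i ω‖ ^ r) ^ (1 / r)) := by
    refine le_csInf ⟨_, G, H, hGm, hHm, hGH, rfl⟩ ?_
    rintro c ⟨g, h, hg, hh, hrr, rfl⟩
    rw [div_le_iff₀ hC]
    calc L ≤ (C₀ ^ (1 - θ) * C₁ ^ θ) * (X₀.nrm g ^ (1 - θ) * X₁.nrm h ^ θ) :=
          rep_bound X₀ X₁ hr hC₀.le hC₁.le h₀ h₁ hθ hθ1 (fun i => (hf i).1) hg hh hrr
      _ = (X₀.nrm g ^ (1 - θ) * X₁.nrm h ^ θ) * (C₀ ^ (1 - θ) * C₁ ^ θ) := mul_comm _ _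
  calc L = (C₀ ^ (1 - θ) * C₁ ^ θ) * (L / (C₀ ^ (1 - θ) * C₁ ^ θ)) := by
        field_simp
    _ ≤ _ := mul_le_mul_of_nonneg_left hdiv hC.le


end Paper
end
end

section
/- Let X be a 2-concave Banach function space and E a Banach space of (Rademacher) cotype 2. Then the vector-valued Banach function space X(E) has cotype 2, with C₂(X(E)) ≤ √2 · M_(2)(X) · C₂(E). -/
open Complex MeasureTheory Finset

noncomputable section

namespace KahaneAux

variable {m : ℕ}

def sg (b : Bool) : ℝ := if b then 1 else -1

lemma sg_not (b : Bool) : sg (!b) = - sg b := by cases b <;> norm_num [sg]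

def wal (A : Finset (Fin m)) (ε : Fin m → Bool) : ℝ := ∏ i ∈ A, sg (ε i)

lemma wal_eq (A : Finset (Fin m)) (ε : Fin m → Bool) :
    wal A ε = ∏ i, (if i ∈ A then sg (ε i) else 1) := by
  rw [wal, Fintype.prod_ite_mem]

/-- Orthogonality over the cube. -/
lemma sum_wal_mul_wal (A B : Finset (Fin m)) :
    ∑ ε : Fin m → Bool, wal A ε * wal B ε = if A = B then (2:ℝ)^m else 0 := by
  have h1 : ∀ ε : Fin m → Bool, wal A ε * wal B ε
      = ∏ i, ((if i ∈ A then sg (ε i) else 1) * (if i ∈ B then sg (ε i) else 1)) := by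
    intro ε; rw [wal_eq, wal_eq, Finset.prod_mul_distrib]
  simp only [h1]
  rw [show (∑ ε : Fin m → Bool, ∏ i, ((if i ∈ A then sg (ε i) else 1) * (if i ∈ B then sg (ε i) else 1)))
      = ∏ i, ∑ b : Bool, ((if i ∈ A then sg b else 1) * (if i ∈ B then sg b else 1)) from
    by rw [Fintype.prod_sum]]
  have h2 : ∀ i : Fin m, (∑ b : Bool, ((if i ∈ A then sg b else 1) * (if i ∈ B then sg b else 1)))
      = if (i ∈ A ↔ i ∈ B) then 2 else 0 := by
    intro i
    by_cases hA : i ∈ A <;> by_cases hB : i ∈ B <;> simp [hA, hB, sg] <;> norm_num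
  simp only [h2]
  by_cases hAB : A = B
  · subst hAB; simp [Finset.prod_const]
  · obtain ⟨i, hi⟩ : ∃ i, ¬(i ∈ A ↔ i ∈ B) := by
      by_contra h
      push_neg at h
      exact hAB (Finset.ext fun i => h i)
    rw [if_neg hAB]
    exact Finset.prod_eq_zero (Finset.mem_univ i) (by simp [hi])

/-- Second orthogonality: sum over all subsets. -/
lemma sum_wal_wal (ε δ : Fin m → Bool) :
    ∑ A : Finset (Fin m), wal A ε * wal A δ = if ε = δ then (2:ℝ)^m else 0 := by
  have h1 : ∀ A : Finset (Fin m), wal A ε * wal A δ = ∏ i ∈ A, (sg (ε i) * sg (δ i)) := by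
    intro A; rw [wal, wal, Finset.prod_mul_distrib]
  simp only [h1]
  have h2 : (∑ A : Finset (Fin m), ∏ i ∈ A, (sg (ε i) * sg (δ i)))
      = ∏ i, (sg (ε i) * sg (δ i) + 1) := by
    rw [Fintype.prod_add]
    refine (Fintype.sum_congr _ _ fun A => ?_).symm
    simp
  rw [h2]
  have h3 : ∀ i : Fin m, sg (ε i) * sg (δ i) + 1 = if ε i = δ i then 2 else 0 := by
    intro i; cases hε : ε i <;> cases hδ : δ i <;> norm_num [sg]
  simp only [h3]
  by_cases hed : ε = δ
  · subst hed; simp [Finset.prod_const]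
  · obtain ⟨i, hi⟩ := Function.ne_iff.mp hed
    rw [if_neg hed]
    exact Finset.prod_eq_zero (Finset.mem_univ i) (by simp [hi])

def coef (f : (Fin m → Bool) → ℝ) (A : Finset (Fin m)) : ℝ := ∑ ε, f ε * wal A ε

lemma coef_empty (f : (Fin m → Bool) → ℝ) : coef f ∅ = ∑ ε, f ε := by
  simp [coef, wal]

/-- Bilinear Parseval. -/
lemma parseval (f g : (Fin m → Bool) → ℝ) :
    ∑ A : Finset (Fin m), coef f A * coef g A = 2^m * ∑ ε, f ε * g ε := by
  have : ∀ A : Finset (Fin m), coef f A * coef g A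
      = ∑ ε, ∑ δ, f ε * g δ * (wal A ε * wal A δ) := by
    intro A
    rw [coef, coef, Finset.sum_mul_sum]
    exact Finset.sum_congr rfl fun ε _ => Finset.sum_congr rfl fun δ _ => by ring
  simp only [this]
  rw [Finset.sum_comm]
  have : ∀ ε : Fin m → Bool, (∑ A : Finset (Fin m), ∑ δ, f ε * g δ * (wal A ε * wal A δ))
      = 2^m * (f ε * g ε) := by
    intro ε
    rw [Finset.sum_comm]
    have h4 : ∀ δ : Fin m → Bool, (∑ A : Finset (Fin m), f ε * g δ * (wal A ε * wal A δ))
        = f ε * g δ * (if ε = δ then (2:ℝ)^m else 0) := by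
      intro δ; rw [← Finset.mul_sum, sum_wal_wal]
    simp only [h4]
    simp [mul_ite, Finset.sum_ite_eq]
    ring
  simp only [this]
  rw [← Finset.mul_sum]


/-- Flip one coordinate. -/
def flip (i : Fin m) (ε : Fin m → Bool) : Fin m → Bool := Function.update ε i (!ε i)

lemma flip_invol (i : Fin m) : Function.Involutive (flip (m := m) i) := by
  intro ε; funext j
  by_cases hj : j = i
  · subst hj; simp [flip, Function.update]
  · simp [flip, Function.update, hj]

lemma flip_apply_self (i : Fin m) (ε : Fin m → Bool) : flip i ε i = !ε i := by
  simp [flip]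

lemma flip_apply_ne (i : Fin m) (ε : Fin m → Bool) {j : Fin m} (h : j ≠ i) :
    flip i ε j = ε j := by simp [flip, Function.update, h]

lemma wal_flip (A : Finset (Fin m)) (i : Fin m) (ε : Fin m → Bool) :
    wal A (flip i ε) = (if i ∈ A then -1 else 1) * wal A ε := by
  by_cases hi : i ∈ A
  · rw [if_pos hi, wal, wal, ← Finset.mul_prod_erase A _ hi, ← Finset.mul_prod_erase A _ hi]
    have h1 : ∀ j ∈ A.erase i, sg (flip i ε j) = sg (ε j) := fun j hj => by
      rw [flip_apply_ne i ε (Finset.ne_of_mem_erase hj)]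
    rw [Finset.prod_congr rfl h1, flip_apply_self, sg_not]
    ring
  · rw [if_neg hi, one_mul, wal, wal]
    exact Finset.prod_congr rfl fun j hj => by
      rw [flip_apply_ne i ε (fun h => hi (h ▸ hj))]

lemma coef_flip (f : (Fin m → Bool) → ℝ) (i : Fin m) (A : Finset (Fin m)) :
    (∑ ε, f (flip i ε) * wal A ε) = (if i ∈ A then -1 else 1) * coef f A := by
  have h0 : (∑ ε, f (flip i ε) * wal A ε) = ∑ ε, f ε * wal A (flip i ε) := by
    rw [← Equiv.sum_comp ((flip_invol i).toPerm) (fun ε => f ε * wal A (flip i ε))]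
    refine Fintype.sum_congr _ _ fun ε => ?_
    have : flip i (flip i ε) = ε := flip_invol i ε
    simp [Function.Involutive.toPerm, this]
  rw [h0, coef, Finset.mul_sum]
  exact Finset.sum_congr rfl fun ε _ => by rw [wal_flip]; ring

/-- Evenness kills odd coefficients. -/
lemma coef_odd (f : (Fin m → Bool) → ℝ) (hf : ∀ ε, f (fun i => !ε i) = f ε)
    (A : Finset (Fin m)) (hA : Odd A.card) : coef f A = 0 := by
  have hinv : Function.Involutive (fun ε : Fin m → Bool => fun i => !ε i) := by
    intro ε; funext i; simp
  have h0 : coef f A = ∑ ε, f ε * wal A (fun i => !ε i) := by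
    rw [coef, ← Equiv.sum_comp hinv.toPerm (fun ε => f ε * wal A (fun i => !ε i))]
    refine Fintype.sum_congr _ _ fun ε => ?_
    have h1 : (fun i => !(!ε i)) = ε := by funext i; simp
    simp only [Function.Involutive.toPerm, Equiv.coe_fn_mk, h1, hf]
  have h2 : ∀ ε : Fin m → Bool, wal A (fun i => !ε i) = (-1)^A.card * wal A ε := by
    intro ε
    rw [wal, wal, ← Finset.prod_const (-1:ℝ), ← Finset.prod_mul_distrib]
    exact Finset.prod_congr rfl fun j _ => by rw [sg_not]; ring
  have h4 : ∑ ε, f ε * wal A (fun i => !ε i) = (-1)^A.card * ∑ ε, f ε * wal A ε := by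
    rw [Finset.mul_sum]
    exact Finset.sum_congr rfl fun ε _ => by rw [h2]; ring
  have h3 : coef f A = (-1)^A.card * coef f A := h0.trans h4

  rw [hA.neg_one_pow] at h3
  linarith

/-- Discrete "sum of flips" operator. -/
def T (f : (Fin m → Bool) → ℝ) (ε : Fin m → Bool) : ℝ := ∑ i, f (flip i ε)

lemma coef_T (f : (Fin m → Bool) → ℝ) (A : Finset (Fin m)) :
    coef (T f) A = ((m : ℝ) - 2 * A.card) * coef f A := by
  have h0 : coef (T f) A = ∑ i, ∑ ε, f (flip i ε) * wal A ε := by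
    simp only [coef]
    rw [Finset.sum_comm]
    exact Finset.sum_congr rfl fun ε _ => by rw [T, Finset.sum_mul]
  rw [h0]
  simp only [coef_flip]
  rw [← Finset.sum_mul]
  congr 1
  have : ∀ i : Fin m, (if i ∈ A then (-1:ℝ) else 1) = 1 - 2 * (if i ∈ A then 1 else 0) := by
    intro i; by_cases hi : i ∈ A <;> simp [hi] <;> norm_num
  simp only [this]
  rw [Finset.sum_sub_distrib, Finset.sum_const, ← Finset.mul_sum, Finset.sum_ite_mem]
  simp

/-- Latała–Oleszkiewicz. -/
theorem LO (f : (Fin m → Bool) → ℝ) (hpos : ∀ ε, 0 ≤ f ε)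
    (heven : ∀ ε, f (fun i => !ε i) = f ε)
    (hT : ∀ ε, ((m : ℝ) - 2) * f ε ≤ T f ε) :
    2^m * ∑ ε, f ε ^ 2 ≤ 2 * (∑ ε, f ε) ^ 2 := by
  have par : ∑ A : Finset (Fin m), coef f A ^ 2 = 2^m * ∑ ε, f ε ^ 2 := by
    simpa [sq] using parseval f f
  have parT : ∑ A : Finset (Fin m), ((m:ℝ) - 2 * A.card) * coef f A ^ 2
      = 2^m * ∑ ε, f ε * T f ε := by
    rw [← parseval f (T f)]
    exact Finset.sum_congr rfl fun A _ => by rw [coef_T]; ring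
  -- Dirichlet bound: ∑ card * coef² ≤ ∑ coef²
  have key1 : ∑ A : Finset (Fin m), (A.card : ℝ) * coef f A ^ 2
      ≤ ∑ A : Finset (Fin m), coef f A ^ 2 := by
    have hpt : ∀ ε : Fin m → Bool, f ε * (((m:ℝ)) * f ε - T f ε) ≤ 2 * f ε ^ 2 := by
      intro ε
      have h1 := hT ε
      have h2 := hpos ε
      nlinarith
    have hsum : 2^m * ∑ ε, f ε * ((m:ℝ) * f ε - T f ε) ≤ 2^m * (2 * ∑ ε, f ε ^ 2) := by
      have : (0:ℝ) ≤ 2^m := by positivity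
      refine mul_le_mul_of_nonneg_left ?_ this
      rw [Finset.mul_sum]
      exact Finset.sum_le_sum fun ε _ => hpt ε
    have hid : 2^m * ∑ ε, f ε * ((m:ℝ) * f ε - T f ε)
        = ∑ A : Finset (Fin m), (2 * A.card : ℝ) * coef f A ^ 2 := by
      have e1 : ∑ ε, f ε * ((m:ℝ) * f ε - T f ε)
          = (m:ℝ) * (∑ ε, f ε ^ 2) - ∑ ε, f ε * T f ε := by
        rw [Finset.mul_sum, ← Finset.sum_sub_distrib]
        exact Finset.sum_congr rfl fun ε _ => by ring
      have e2 : ∑ A : Finset (Fin m), (2 * A.card : ℝ) * coef f A ^ 2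
          = (m:ℝ) * (∑ A : Finset (Fin m), coef f A ^ 2)
            - ∑ A : Finset (Fin m), ((m:ℝ) - 2 * A.card) * coef f A ^ 2 := by
        rw [Finset.mul_sum, ← Finset.sum_sub_distrib]
        exact Finset.sum_congr rfl fun A _ => by ring
      rw [e1, e2, par, parT]
      ring
    rw [hid] at hsum
    have : ∑ A : Finset (Fin m), (2 * A.card : ℝ) * coef f A ^ 2
        = 2 * ∑ A : Finset (Fin m), (A.card : ℝ) * coef f A ^ 2 := by
      rw [Finset.mul_sum]; exact Finset.sum_congr rfl fun A _ => by ring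
    rw [this] at hsum
    rw [par] at *
    nlinarith [hsum]
  -- per-A comparison: coef² − (∅ indicator) ≤ (card/2) coef²
  have key2 : ∀ A : Finset (Fin m),
      coef f A ^ 2 - (if A = ∅ then coef f A ^ 2 else 0)
        ≤ (1/2) * ((A.card : ℝ) * coef f A ^ 2) := by
    intro A
    by_cases hA : A = ∅
    · subst hA; simp
    · rw [if_neg hA, sub_zero]
      rcases Nat.lt_or_ge A.card 2 with h2 | h2
      · interval_cases h : A.card
        · exact absurd (Finset.card_eq_zero.mp h) hA
        · have : coef f A = 0 := coef_odd f heven A (by rw [h]; exact odd_one)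
          simp [this]
      · have : (2:ℝ) ≤ (A.card : ℝ) := by exact_mod_cast h2
        nlinarith [sq_nonneg (coef f A)]
  have hsum2 : ∑ A : Finset (Fin m),
      (coef f A ^ 2 - (if A = ∅ then coef f A ^ 2 else 0))
        ≤ ∑ A : Finset (Fin m), (1/2) * ((A.card : ℝ) * coef f A ^ 2) :=
    Finset.sum_le_sum fun A _ => key2 A
  rw [Finset.sum_sub_distrib] at hsum2
  have hempty : ∑ A : Finset (Fin m), (if A = ∅ then coef f A ^ 2 else 0)
      = coef f ∅ ^ 2 := by
    rw [Finset.sum_ite_eq' Finset.univ (∅ : Finset (Fin m)) (fun A => coef f A ^ 2)]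
    simp
  rw [hempty, ← Finset.mul_sum] at hsum2
  have hfin : ∑ A : Finset (Fin m), coef f A ^ 2 ≤ 2 * coef f ∅ ^ 2 := by
    linarith [key1]
  rw [par, coef_empty] at hfin
  exact hfin

/-- Kahane–Khinchine with constant √2 (in squared form). -/
theorem kahane {E : Type*} [NormedAddCommGroup E] [NormedSpace ℝ E] (m : ℕ) (v : Fin m → E) :
    2^m * ∑ ε : Fin m → Bool, ‖∑ i, (if ε i then v i else -v i)‖ ^ 2
      ≤ 2 * (∑ ε : Fin m → Bool, ‖∑ i, (if ε i then v i else -v i)‖) ^ 2 := by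
  set S : (Fin m → Bool) → E := fun ε => ∑ i, (if ε i then v i else -v i) with hS
  refine LO (fun ε => ‖S ε‖) (fun ε => norm_nonneg _) ?_ ?_
  · intro ε
    have h1 : S (fun i => !ε i) = - S ε := by
      rw [hS]
      simp only
      rw [← Finset.sum_neg_distrib]
      refine Finset.sum_congr rfl fun i _ => ?_
      rcases Bool.eq_false_or_eq_true (ε i) with h | h <;> simp [h]
    simp only [h1, norm_neg]
  · intro ε
    have hdiff : ∀ i : Fin m, S ε - S (flip i ε)
        = (if ε i then v i else -v i) + (if ε i then v i else -v i) := by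
      intro i
      rw [hS]
      simp only
      rw [← Finset.sum_sub_distrib]
      rw [Finset.sum_eq_single i]
      · rw [flip_apply_self]
        rcases Bool.eq_false_or_eq_true (ε i) with h | h <;> simp [h] <;> abel
      · intro j _ hj
        rw [flip_apply_ne i ε hj, sub_self]
      · intro h; exact absurd (Finset.mem_univ i) h
    have hsumflip : ∑ i, S (flip i ε) = ((m:ℝ) - 2) • S ε := by
      have e1 : ∀ i : Fin m, S (flip i ε)
          = S ε - ((if ε i then v i else -v i) + (if ε i then v i else -v i)) := by
        intro i
        rw [← hdiff i]; abel
      rw [Finset.sum_congr rfl (fun i _ => e1 i), Finset.sum_sub_distrib,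
        Finset.sum_const, Finset.sum_add_distrib]
      have hSe : (∑ i, if ε i then v i else -v i) = S ε := rfl
      rw [hSe, sub_smul, Nat.cast_smul_eq_nsmul, two_smul]
      simp [Finset.card_univ]
    have hnorm : ((m:ℝ) - 2) * ‖S ε‖ ≤ ∑ i, ‖S (flip i ε)‖ := by
      calc ((m:ℝ) - 2) * ‖S ε‖ ≤ |(m:ℝ) - 2| * ‖S ε‖ :=
            mul_le_mul_of_nonneg_right (le_abs_self _) (norm_nonneg _)
        _ = ‖((m:ℝ) - 2) • S ε‖ := by rw [norm_smul, Real.norm_eq_abs]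
        _ = ‖∑ i, S (flip i ε)‖ := by rw [hsumflip]
        _ ≤ ∑ i, ‖S (flip i ε)‖ := norm_sum_le _ _
    exact hnorm

end KahaneAux
namespace Paper

variable {Ω : Type*} [MeasurableSpace Ω] {μ : Measure Ω} {K : Type*} [RCLike K]

theorem BFS.nrm_zero' (X : BFS Ω μ K) : X.nrm 0 = 0 := by
  have h := X.nrm_smul 0 0
  simpa using h

theorem BFS.mem_finsum (X : BFS Ω μ K) {ι : Type*} (s : Finset ι) (f : ι → Ω → K)
    (hf : ∀ i ∈ s, X.mem (f i)) : X.mem (∑ i ∈ s, f i) := by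
  classical
  induction s using Finset.cons_induction with
  | empty => simpa using X.mem_zero
  | cons a s ha ih =>
      rw [Finset.sum_cons]
      exact X.mem_add _ _ (hf a (Finset.mem_cons_self a s))
        (ih fun i hi => hf i (Finset.mem_cons_of_mem hi))

theorem BFS.nrm_finsum_le (X : BFS Ω μ K) {ι : Type*} (s : Finset ι) (f : ι → Ω → K)
    (hf : ∀ i ∈ s, X.mem (f i)) : X.nrm (∑ i ∈ s, f i) ≤ ∑ i ∈ s, X.nrm (f i) := by
  classical
  induction s using Finset.cons_induction with
  | empty => simpa using le_of_eq (X.nrm_zero')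
  | cons a s ha ih =>
      rw [Finset.sum_cons, Finset.sum_cons]
      calc X.nrm (f a + ∑ i ∈ s, f i) ≤ X.nrm (f a) + X.nrm (∑ i ∈ s, f i) :=
            X.nrm_add _ _ (hf a (Finset.mem_cons_self a s))
              (X.mem_finsum s f fun i hi => hf i (Finset.mem_cons_of_mem hi))
        _ ≤ X.nrm (f a) + ∑ i ∈ s, X.nrm (f i) :=
            add_le_add (le_refl _) (ih fun i hi => hf i (Finset.mem_cons_of_mem hi))

/-- if `X` is 2-concave and `E` has cotype 2, then `X(E)` has
cotype 2 with `C₂(X(E)) ≤ √2 · M_(2)(X) · C₂(E)`. -/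
theorem statement7 {Ω' : Type*} [MeasurableSpace Ω'] (μ : Measure Ω')
    [SigmaFinite μ] (hμc : μ.IsComplete) (X : BFS Ω' μ ℝ)
    (M : ℝ) (hX : X.RConcaveWith 2 M)
    {E : Type*} [NormedAddCommGroup E] [NormedSpace ℝ E] [CompleteSpace E]
    (C : ℝ) (hE : Cotype2With (fun e : E => ‖e‖) C)
    (m : ℕ) (x : Fin m → Ω' → E)
    (hx : ∀ i, AEStronglyMeasurable (x i) μ ∧ X.mem fun ω => ‖x i ω‖) :
    Real.sqrt (∑ i, (X.nrm fun ω => ‖x i ω‖) ^ 2) ≤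
      (Real.sqrt 2 * M * C) *
        Real.sqrt (radAvg (fun y : Ω' → E => X.nrm fun ω => ‖y ω‖) x) := by
  classical
  set h : (Fin m → Bool) → Ω' → ℝ :=
    fun ε ω => ‖∑ i, (if ε i then x i ω else -(x i ω))‖ with hh
  have hfmem : ∀ i, X.mem fun ω => ‖x i ω‖ := fun i => (hx i).2
  have hsmem : X.mem (∑ i, fun ω => ‖x i ω‖) := X.mem_finsum _ _ fun i _ => hfmem i
  have hmeasS : ∀ ε : Fin m → Bool, AEStronglyMeasurable (h ε) μ := by
    intro ε
    apply AEStronglyMeasurable.norm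
    apply Finset.aestronglyMeasurable_fun_sum
    intro i _
    by_cases hb : ε i
    · simpa [hb] using (hx i).1
    · simpa [hb] using (hx i).1.fun_neg
  have hmemh : ∀ ε : Fin m → Bool,
      X.mem (h ε) ∧ X.nrm (h ε) ≤ X.nrm (∑ i, fun ω => ‖x i ω‖) := by
    intro ε
    refine X.ideal _ _ (hmeasS ε) hsmem (Filter.Eventually.of_forall fun ω => ?_)
    have h1 : (∑ i, (fun ω' => ‖x i ω'‖)) ω = ∑ i, ‖x i ω‖ := by
      simp [Finset.sum_apply]
    rw [Real.norm_of_nonneg (norm_nonneg _), h1,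
      Real.norm_of_nonneg (Finset.sum_nonneg fun i _ => norm_nonneg _)]
    calc ‖∑ i, (if ε i then x i ω else -(x i ω))‖
        ≤ ∑ i, ‖if ε i then x i ω else -(x i ω)‖ := norm_sum_le _ _
      _ = ∑ i, ‖x i ω‖ := Finset.sum_congr rfl fun i _ => by
          by_cases hb : ε i <;> simp [hb]
  have hrad : radAvg (fun y : Ω' → E => X.nrm fun ω => ‖y ω‖) x
      = ((2:ℝ)^m)⁻¹ * ∑ ε : Fin m → Bool, X.nrm (h ε) ^ 2 := by
    unfold radAvg
    congr 1
    refine Finset.sum_congr rfl fun ε _ => ?_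
    have he : (fun ω => ‖(∑ i, if ε i then x i else -x i) ω‖) = h ε := by
      funext ω
      simp [hh, Finset.sum_apply, apply_ite (fun (f : Ω' → E) => f ω)]
    show X.nrm (fun ω => ‖(∑ i, if ε i then x i else -x i) ω‖) ^ 2 = X.nrm (h ε) ^ 2
    rw [he]
  by_cases htriv : ∀ f, X.mem f → X.nrm f = 0
  · have l0 : ∀ i : Fin m, X.nrm (fun ω => ‖x i ω‖) = 0 := fun i => htriv _ (hfmem i)
    have r0 : ∀ ε, X.nrm (h ε) = 0 := fun ε => htriv _ (hmemh ε).1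
    rw [hrad]
    simp [l0, r0]
  push_neg at htriv
  obtain ⟨f₀, hf₀mem, hf₀⟩ := htriv
  have hf₀pos : 0 < X.nrm f₀ := lt_of_le_of_ne (X.nrm_nonneg f₀) (Ne.symm hf₀)
  have hM : 0 < M := by
    have h1 := hX 1 (fun _ => f₀) (fun _ => hf₀mem)
    simp only [Fin.sum_univ_one] at h1
    have hlhs : 0 < (X.nrm f₀ ^ (2:ℝ)) ^ (1/(2:ℝ)) :=
      Real.rpow_pos_of_pos (Real.rpow_pos_of_pos hf₀pos 2) _
    obtain ⟨b, hb, h1'⟩ : ∃ b : ℝ, 0 ≤ b ∧ (X.nrm f₀ ^ (2:ℝ)) ^ (1/(2:ℝ)) ≤ M * b :=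
      ⟨_, X.nrm_nonneg _, h1⟩
    nlinarith [hlhs, hb, h1']
  by_cases hEtriv : ∀ e : E, e = (0:E)
  · have r0 : ∀ ε, X.nrm (h ε) = 0 := by
      intro ε
      have he : h ε = (0 : Ω' → ℝ) := funext fun ω => by
        show ‖∑ i, (if ε i then x i ω else -(x i ω))‖ = 0
        rw [hEtriv (∑ i, (if ε i then x i ω else -(x i ω)))]
        exact norm_zero
      rw [he]
      exact X.nrm_zero'
    have l0 : ∀ i : Fin m, X.nrm (fun ω => ‖x i ω‖) = 0 := by
      intro i
      have he : (fun ω => ‖x i ω‖) = (0 : Ω' → ℝ) := funext fun ω => by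
        rw [hEtriv (x i ω)]; exact norm_zero
      rw [he]
      exact X.nrm_zero'
    rw [hrad]
    simp [l0, r0]
  push_neg at hEtriv
  obtain ⟨e₀, he₀⟩ := hEtriv
  have hC : 0 < C := by
    have h1 := hE 1 (fun _ => e₀)
    rw [Fin.sum_univ_one, Real.sqrt_sq (norm_nonneg e₀)] at h1
    have h2 : 0 < ‖e₀‖ := norm_pos_iff.mpr he₀
    nlinarith [Real.sqrt_nonneg (radAvg (fun e : E => ‖e‖) (fun _ : Fin 1 => e₀)), h1, h2]
  -- main case
  have h2cast : ∀ a : ℝ, a ^ (2:ℝ) = a ^ (2:ℕ) := fun a => by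
    rw [show (2:ℝ) = ((2:ℕ):ℝ) by norm_num, Real.rpow_natCast]
  have hconc := hX m (fun i => fun ω => ‖x i ω‖) (fun i => hfmem i)
  simp only [RCLike.ofReal_real_eq_id, id_eq, ← Real.sqrt_eq_rpow, h2cast, norm_norm] at hconc
  set g1 : Ω' → ℝ := (((2:ℝ)^m)⁻¹ : ℝ) • (∑ ε : Fin m → Bool, h ε) with hg1def
  have hg1app : ∀ ω, g1 ω = ((2:ℝ)^m)⁻¹ * ∑ ε : Fin m → Bool, h ε ω := by
    intro ω
    simp [hg1def, Finset.sum_apply]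
  have hg1nonneg : ∀ ω, 0 ≤ g1 ω := by
    intro ω
    rw [hg1app]
    exact mul_nonneg (by positivity) (Finset.sum_nonneg fun ε _ => norm_nonneg _)
  have hpoint : ∀ ω, Real.sqrt (∑ i, ‖x i ω‖^2) ≤ (Real.sqrt 2 * C) * g1 ω := by
    intro ω
    have hco := hE m (fun i => x i ω)
    have hra : radAvg (fun e : E => ‖e‖) (fun i => x i ω)
        = ((2:ℝ)^m)⁻¹ * ∑ ε : Fin m → Bool, h ε ω ^ 2 := rfl
    have hb : (0:ℝ) ≤ ∑ ε : Fin m → Bool, h ε ω := Finset.sum_nonneg fun ε _ => norm_nonneg _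
    have hkah : Real.sqrt (((2:ℝ)^m)⁻¹ * ∑ ε : Fin m → Bool, h ε ω ^ 2)
        ≤ Real.sqrt 2 * (((2:ℝ)^m)⁻¹ * ∑ ε : Fin m → Bool, h ε ω) := by
      have hk := KahaneAux.kahane (E := E) m (fun i => x i ω)
      have h2 : ((2:ℝ)^m)⁻¹ * (∑ ε : Fin m → Bool, h ε ω^2)
          ≤ 2 * (((2:ℝ)^m)⁻¹ * ∑ ε : Fin m → Bool, h ε ω)^2 := by
        have e1 : ((2:ℝ)^m)⁻¹ * (∑ ε : Fin m → Bool, h ε ω^2)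
            = (((2:ℝ)^m)⁻¹)^2 * ((2:ℝ)^m * ∑ ε : Fin m → Bool, h ε ω^2) := by
          have : ((2:ℝ)^m) ≠ 0 := by positivity
          field_simp
        rw [e1, mul_pow]
        calc (((2:ℝ)^m)⁻¹)^2 * ((2:ℝ)^m * ∑ ε : Fin m → Bool, h ε ω^2)
            ≤ (((2:ℝ)^m)⁻¹)^2 * (2 * (∑ ε : Fin m → Bool, h ε ω)^2) :=
              mul_le_mul_of_nonneg_left hk (by positivity)
          _ = 2 * ((((2:ℝ)^m)⁻¹)^2 * (∑ ε : Fin m → Bool, h ε ω)^2) := by ring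
      calc Real.sqrt (((2:ℝ)^m)⁻¹ * ∑ ε : Fin m → Bool, h ε ω ^ 2)
          ≤ Real.sqrt (2 * (((2:ℝ)^m)⁻¹ * ∑ ε : Fin m → Bool, h ε ω)^2) :=
            Real.sqrt_le_sqrt h2
        _ = Real.sqrt 2 * (((2:ℝ)^m)⁻¹ * ∑ ε : Fin m → Bool, h ε ω) := by
            rw [Real.sqrt_mul (by norm_num), Real.sqrt_sq (by positivity)]
    calc Real.sqrt (∑ i, ‖x i ω‖^2)
        ≤ C * Real.sqrt (radAvg (fun e : E => ‖e‖) (fun i => x i ω)) := hco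
      _ = C * Real.sqrt (((2:ℝ)^m)⁻¹ * ∑ ε : Fin m → Bool, h ε ω ^ 2) := by rw [hra]
      _ ≤ C * (Real.sqrt 2 * (((2:ℝ)^m)⁻¹ * ∑ ε : Fin m → Bool, h ε ω)) :=
          mul_le_mul_of_nonneg_left hkah hC.le
      _ = (Real.sqrt 2 * C) * g1 ω := by rw [hg1app]; ring
  have hGmeas : AEStronglyMeasurable (fun ω => Real.sqrt (∑ i, ‖x i ω‖^2)) μ := by
    have h1 : AEMeasurable (fun ω => ∑ i, ‖x i ω‖^2) μ :=
      Finset.aemeasurable_fun_sum _ fun i _ => ((hx i).1.norm.aemeasurable).pow_const 2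
    exact (Real.continuous_sqrt.measurable.comp_aemeasurable h1).aestronglyMeasurable
  have hg1mem : X.mem g1 := X.mem_smul _ _ (X.mem_finsum _ _ fun ε _ => (hmemh ε).1)
  have hcg1mem : X.mem ((Real.sqrt 2 * C) • g1) := X.mem_smul _ _ hg1mem
  have hid := X.ideal (fun ω => Real.sqrt (∑ i, ‖x i ω‖^2)) ((Real.sqrt 2 * C) • g1)
    hGmeas hcg1mem (Filter.Eventually.of_forall fun ω => by
      have hr : ((Real.sqrt 2 * C) • g1) ω = (Real.sqrt 2 * C) * g1 ω := rfl
      rw [Real.norm_of_nonneg (Real.sqrt_nonneg _), hr,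
        Real.norm_of_nonneg (mul_nonneg (mul_nonneg (Real.sqrt_nonneg 2) hC.le) (hg1nonneg ω))]
      exact hpoint ω)
  have hGle : X.nrm (fun ω => Real.sqrt (∑ i, ‖x i ω‖^2))
      ≤ (Real.sqrt 2 * C) * X.nrm g1 := by
    refine le_trans hid.2 ?_
    rw [X.nrm_smul]
    exact mul_le_mul_of_nonneg_right
      (le_of_eq (Real.norm_of_nonneg (mul_nonneg (Real.sqrt_nonneg 2) hC.le)))
      (X.nrm_nonneg _)
  have hg1nrm : X.nrm g1 ≤ ((2:ℝ)^m)⁻¹ * ∑ ε : Fin m → Bool, X.nrm (h ε) := by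
    rw [hg1def, X.nrm_smul, Real.norm_of_nonneg (by positivity)]
    exact mul_le_mul_of_nonneg_left
      (X.nrm_finsum_le _ _ fun ε _ => (hmemh ε).1) (by positivity)
  have hcs : ((2:ℝ)^m)⁻¹ * ∑ ε : Fin m → Bool, X.nrm (h ε)
      ≤ Real.sqrt (((2:ℝ)^m)⁻¹ * ∑ ε : Fin m → Bool, X.nrm (h ε)^2) := by
    have hx0 : (0:ℝ) ≤ ((2:ℝ)^m)⁻¹ * ∑ ε : Fin m → Bool, X.nrm (h ε) :=
      mul_nonneg (by positivity) (Finset.sum_nonneg fun ε _ => X.nrm_nonneg _)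
    have hy0 : (0:ℝ) ≤ ((2:ℝ)^m)⁻¹ * ∑ ε : Fin m → Bool, X.nrm (h ε)^2 :=
      mul_nonneg (by positivity) (Finset.sum_nonneg fun ε _ => sq_nonneg _)
    rw [Real.le_sqrt hx0 hy0]
    have hCS := sq_sum_le_card_mul_sum_sq
      (s := (Finset.univ : Finset (Fin m → Bool))) (f := fun ε => X.nrm (h ε))
    have hcard : (((Finset.univ : Finset (Fin m → Bool)).card : ℕ) : ℝ) = (2:ℝ)^m := by
      rw [Finset.card_univ]
      rw [show Fintype.card (Fin m → Bool) = 2^m by simp [Fintype.card_fun]]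
      push_cast
      ring
    calc (((2:ℝ)^m)⁻¹ * ∑ ε : Fin m → Bool, X.nrm (h ε))^2
        = (((2:ℝ)^m)⁻¹)^2 * (∑ ε : Fin m → Bool, X.nrm (h ε))^2 := by ring
      _ ≤ (((2:ℝ)^m)⁻¹)^2 * ((2:ℝ)^m * ∑ ε : Fin m → Bool, X.nrm (h ε)^2) := by
          refine mul_le_mul_of_nonneg_left ?_ (by positivity)
          calc (∑ ε : Fin m → Bool, X.nrm (h ε))^2
              ≤ ((Finset.univ : Finset (Fin m → Bool)).card : ℝ)
                  * ∑ ε : Fin m → Bool, X.nrm (h ε)^2 := hCS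
            _ = (2:ℝ)^m * ∑ ε : Fin m → Bool, X.nrm (h ε)^2 := by rw [hcard]
      _ = ((2:ℝ)^m)⁻¹ * ∑ ε : Fin m → Bool, X.nrm (h ε)^2 := by
          have : ((2:ℝ)^m) ≠ 0 := by positivity
          field_simp
  calc Real.sqrt (∑ i, (X.nrm fun ω => ‖x i ω‖)^2)
      ≤ M * X.nrm (fun ω => Real.sqrt (∑ i, ‖x i ω‖^2)) := hconc
    _ ≤ M * ((Real.sqrt 2 * C) * X.nrm g1) := mul_le_mul_of_nonneg_left hGle hM.le
    _ ≤ M * ((Real.sqrt 2 * C) * (((2:ℝ)^m)⁻¹ * ∑ ε : Fin m → Bool, X.nrm (h ε))) :=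
        mul_le_mul_of_nonneg_left (mul_le_mul_of_nonneg_left hg1nrm
          (mul_nonneg (Real.sqrt_nonneg 2) hC.le)) hM.le
    _ ≤ M * ((Real.sqrt 2 * C)
          * Real.sqrt (((2:ℝ)^m)⁻¹ * ∑ ε : Fin m → Bool, X.nrm (h ε)^2)) :=
        mul_le_mul_of_nonneg_left (mul_le_mul_of_nonneg_left hcs
          (mul_nonneg (Real.sqrt_nonneg 2) hC.le)) hM.le
    _ = (Real.sqrt 2 * M * C)
          * Real.sqrt (radAvg (fun y : Ω' → E => X.nrm fun ω => ‖y ω‖) x) := by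
        rw [hrad]; ring


end Paper
end
end

section
/- Let [M₀,M₁] and [N₀,N₁] be interpolation couples of finite-dimensional Banach spaces (same underlying spaces with two norms) and 0 < θ < 1. Then the identity map from the complex interpolation space [L(M₀,N₀), L(M₁,N₁)]_θ into L([M₀,M₁]_θ, [N₀,N₁]_θ) has norm at most 1. -/
open Complex MeasureTheory Finset

noncomputable section

namespace Paper

variable {Ω : Type*} [MeasurableSpace Ω] {μ : Measure Ω} {K : Type*} [RCLike K]

private def Syn (n : ℕ) : Type := Fin n → ℂ
instance (n : ℕ) : AddCommGroup (Syn n) := inferInstanceAs (AddCommGroup (Fin n → ℂ))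
instance (n : ℕ) : Module ℂ (Syn n) := inferInstanceAs (Module ℂ (Fin n → ℂ))
instance (n : ℕ) : FiniteDimensional ℂ (Syn n) :=
  inferInstanceAs (FiniteDimensional ℂ (Fin n → ℂ))

lemma normC_equiv {k : ℕ} {N : (Fin k → ℂ) → ℝ} (h : IsNormC N) :
    ∃ c : ℝ, 0 < c ∧ (∀ x, ‖x‖ ≤ c * N x) ∧ (∀ x, N x ≤ c * ‖x‖) := by
  obtain ⟨h0, hker, hsmul, hadd⟩ := h
  letI : NormedAddCommGroup (Syn k) := AddGroupNorm.toNormedAddCommGroup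
    { toFun := N
      map_zero' := by have h := hsmul 0 0; rw [zero_smul, norm_zero, zero_mul] at h; exact h
      add_le' := hadd
      neg' := fun x => by have h := hsmul (-1) (show Fin k → ℂ from x); rw [neg_one_smul, norm_neg, norm_one, one_mul] at h; exact h
      eq_zero_of_map_eq_zero' := fun x hx => hker x hx }
  letI : NormedSpace ℂ (Syn k) := ⟨fun c x => le_of_eq (hsmul c x)⟩
  let fl : (Fin k → ℂ) →ₗ[ℂ] Syn k :=
    { toFun := fun x => x, map_add' := fun _ _ => rfl, map_smul' := fun _ _ => rfl }
  let gl : Syn k →ₗ[ℂ] (Fin k → ℂ) :=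
    { toFun := fun x => x, map_add' := fun _ _ => rfl, map_smul' := fun _ _ => rfl }
  let f : (Fin k → ℂ) →L[ℂ] Syn k := LinearMap.toContinuousLinearMap fl
  let g : Syn k →L[ℂ] (Fin k → ℂ) := LinearMap.toContinuousLinearMap gl
  refine ⟨max (max ‖f‖ ‖g‖) 1, lt_of_lt_of_le one_pos (le_max_right _ _), ?_, ?_⟩
  · intro x
    have h2 : ‖x‖ ≤ ‖g‖ * N x := g.le_opNorm (fl x)
    calc ‖x‖ ≤ ‖g‖ * N x := h2
      _ ≤ max (max ‖f‖ ‖g‖) 1 * N x := by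
          apply mul_le_mul_of_nonneg_right _ (h0 x)
          exact le_trans (le_max_right _ _) (le_max_left _ _)
  · intro x
    have h2 : N x ≤ ‖f‖ * ‖x‖ := f.le_opNorm x
    calc N x ≤ ‖f‖ * ‖x‖ := h2
      _ ≤ max (max ‖f‖ ‖g‖) 1 * ‖x‖ := by
          apply mul_le_mul_of_nonneg_right _ (norm_nonneg x)
          exact le_trans (le_max_left _ _) (le_max_left _ _)

lemma IsNormC.zero {V : Type*} [AddCommGroup V] [Module ℂ V] {N : V → ℝ}
    (h : IsNormC N) : N 0 = 0 := by simpa using h.2.2.1 0 0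

lemma opN_nonneg {X Y : Type*} (NX : X → ℝ) {NY : Y → ℝ} (hNY : ∀ y, 0 ≤ NY y)
    (f : X → Y) : 0 ≤ opN NX NY f :=
  Real.sSup_nonneg (by rintro r ⟨x, -, rfl⟩; exact hNY _)

lemma opN_bddAbove {k l : ℕ} {N₀ : (Fin k → ℂ) → ℝ} {N₁ : (Fin l → ℂ) → ℝ}
    (h₀ : IsNormC N₀) (h₁ : IsNormC N₁) (S : (Fin k → ℂ) →L[ℂ] (Fin l → ℂ)) :
    BddAbove {r : ℝ | ∃ x, N₀ x ≤ 1 ∧ r = N₁ (S x)} := by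
  obtain ⟨c, hc, hcl, -⟩ := normC_equiv h₀
  obtain ⟨d, hd, -, hdu⟩ := normC_equiv h₁
  refine ⟨d * (‖S‖ * c), ?_⟩
  rintro r ⟨x, hx, rfl⟩
  have hxc : ‖x‖ ≤ c := le_trans (hcl x) (mul_le_of_le_one_right hc.le hx)
  calc N₁ (S x) ≤ d * ‖S x‖ := hdu _
    _ ≤ d * (‖S‖ * c) := by
        refine mul_le_mul_of_nonneg_left (le_trans (S.le_opNorm x) ?_) hd.le
        exact mul_le_mul_of_nonneg_left hxc (norm_nonneg S)

lemma apply_le_opN {k l : ℕ} {N₀ : (Fin k → ℂ) → ℝ} {N₁ : (Fin l → ℂ) → ℝ}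
    (h₀ : IsNormC N₀) (h₁ : IsNormC N₁) (S : (Fin k → ℂ) →L[ℂ] (Fin l → ℂ))
    (y : Fin k → ℂ) : N₁ (S y) ≤ opN N₀ N₁ ⇑S * N₀ y := by
  rcases eq_or_lt_of_le (h₀.1 y) with hy | hy
  · have hy0 : y = 0 := h₀.2.1 y hy.symm
    rw [hy0]
    simp [map_zero, h₁.zero, h₀.zero]
  · set a := N₀ y with ha
    have hmem : a⁻¹ * N₁ (S y) ∈ {r : ℝ | ∃ x, N₀ x ≤ 1 ∧ r = N₁ (S x)} := by
      refine ⟨((a : ℂ))⁻¹ • y, ?_, ?_⟩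
      · have h1 : N₀ (((a : ℂ))⁻¹ • y) = ‖((a : ℂ))⁻¹‖ * a := h₀.2.2.1 _ _
        rw [h1]
        have h2 : ‖((a : ℂ))⁻¹‖ = a⁻¹ := by
          rw [norm_inv, Complex.norm_real, Real.norm_of_nonneg hy.le]
        rw [h2, inv_mul_cancel₀ (ne_of_gt hy)]
      · rw [_root_.map_smul, h₁.2.2.1]
        congr 1
        rw [norm_inv, Complex.norm_real, Real.norm_of_nonneg hy.le]
    have h3 := le_csSup (opN_bddAbove h₀ h₁ S) hmem
    have h4 := mul_le_mul_of_nonneg_right h3 hy.le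
    calc N₁ (S y) = a⁻¹ * N₁ (S y) * a := by field_simp
      _ ≤ opN N₀ N₁ ⇑S * a := h4

lemma const_mem_interp_set {D : Type*} [AddCommGroup D] [Module ℂ D]
    (θ : ℝ) (N₀ N₁ : D → ℝ) (x : D) :
    max (N₀ x) (N₁ x) ∈ {c : ℝ | ∃ (m : ℕ) (φ : Fin m → ℂ → ℂ) (v : Fin m → D),
    (∀ i, ContinuousOn (φ i) Strip) ∧
    (∀ i, DifferentiableOn ℂ (φ i) OStrip) ∧
    (∀ i, ∃ B : ℝ, ∀ z ∈ Strip, ‖φ i z‖ ≤ B) ∧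
    (∑ i, φ i (θ : ℂ) • v i) = x ∧
    (∀ t : ℝ, N₀ (∑ i, φ i (Complex.I * t) • v i) ≤ c) ∧
    (∀ t : ℝ, N₁ (∑ i, φ i (1 + Complex.I * t) • v i) ≤ c)} := by
  refine ⟨1, fun _ _ => (1 : ℂ), fun _ => x, fun i => continuousOn_const,
    fun i => differentiableOn_const _, fun i => ⟨1, fun z _ => by simp⟩, by simp, ?_, ?_⟩
  · intro t; simp [le_max_left]
  · intro t; simp [le_max_right]

lemma prod_sum_eval {k l m₂ m₁ : ℕ} (ψ : Fin m₂ → ℂ)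
    (S : Fin m₂ → (Fin k → ℂ) →L[ℂ] (Fin l → ℂ))
    (φ : Fin m₁ → ℂ) (v : Fin m₁ → Fin k → ℂ) :
    ∑ p : Fin (m₂ * m₁), (ψ (finProdFinEquiv.symm p).1 * φ (finProdFinEquiv.symm p).2) •
        (S (finProdFinEquiv.symm p).1) (v (finProdFinEquiv.symm p).2) =
      (∑ j, ψ j • S j) (∑ i, φ i • v i) := by
  rw [← Equiv.sum_comp (finProdFinEquiv : Fin m₂ × Fin m₁ ≃ Fin (m₂ * m₁))
    (fun p => (ψ (finProdFinEquiv.symm p).1 * φ (finProdFinEquiv.symm p).2) •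
        (S (finProdFinEquiv.symm p).1) (v (finProdFinEquiv.symm p).2))]
  simp only [Equiv.symm_apply_apply]
  rw [Fintype.sum_prod_type]
  simp only [ContinuousLinearMap.sum_apply, ContinuousLinearMap.smul_apply, map_sum, _root_.map_smul,
    Finset.smul_sum, smul_smul]
  rw [Finset.sum_comm]
  simp [smul_smul, mul_comm]

/-- the identity `[L(M₀,N₀),L(M₁,N₁)]_θ → L([M₀,M₁]_θ,[N₀,N₁]_θ)`
has norm at most 1. -/
theorem statement10 {n m : ℕ} (θ : ℝ) (hθ : 0 < θ) (hθ1 : θ < 1)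
    (NM₀ NM₁ : (Fin n → ℂ) → ℝ) (NN₀ NN₁ : (Fin m → ℂ) → ℝ)
    (hM₀ : IsNormC NM₀) (hM₁ : IsNormC NM₁)
    (hN₀ : IsNormC NN₀) (hN₁ : IsNormC NN₁)
    (T : (Fin n → ℂ) →L[ℂ] (Fin m → ℂ)) :
    opN (interpN θ NM₀ NM₁) (interpN θ NN₀ NN₁) ⇑T ≤
      interpN θ (fun S : (Fin n → ℂ) →L[ℂ] (Fin m → ℂ) => opN NM₀ NN₀ ⇑S)
        (fun S : (Fin n → ℂ) →L[ℂ] (Fin m → ℂ) => opN NM₁ NN₁ ⇑S) T := by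
  apply Real.sSup_le
  · rintro r ⟨x, hx, rfl⟩
    rw [interpN] at hx ⊢
    refine le_csInf ⟨_, const_mem_interp_set θ (fun S : (Fin n → ℂ) →L[ℂ] (Fin m → ℂ) => opN NM₀ NN₀ ⇑S) (fun S : (Fin n → ℂ) →L[ℂ] (Fin m → ℂ) => opN NM₁ NN₁ ⇑S) T⟩ ?_
    rintro c' ⟨m₂, ψ, S, hψc, hψd, hψb, hψθ, hψ0, hψ1⟩
    have hc'0 : 0 ≤ c' := le_trans (opN_nonneg _ hN₀.1 _) (hψ0 0)
    -- Key: for every admissible constant c for x, interpN (T x) ≤ c' * c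
    have key : ∀ c ∈ {c : ℝ | ∃ (m₁ : ℕ) (φ : Fin m₁ → ℂ → ℂ) (v : Fin m₁ → Fin n → ℂ),
        (∀ i, ContinuousOn (φ i) Strip) ∧
        (∀ i, DifferentiableOn ℂ (φ i) OStrip) ∧
        (∀ i, ∃ B : ℝ, ∀ z ∈ Strip, ‖φ i z‖ ≤ B) ∧
        (∑ i, φ i (θ : ℂ) • v i) = x ∧
        (∀ t : ℝ, NM₀ (∑ i, φ i (Complex.I * t) • v i) ≤ c) ∧
        (∀ t : ℝ, NM₁ (∑ i, φ i (1 + Complex.I * t) • v i) ≤ c)},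
        interpN θ NN₀ NN₁ (T x) ≤ c' * c := by
      rintro c ⟨m₁, φ, v, hφc, hφd, hφb, hφθ, hφ0, hφ1⟩
      have hc0 : 0 ≤ c := le_trans (hM₀.1 _) (hφ0 0)
      rw [interpN]
      have hbdd : BddBelow {c : ℝ | ∃ (m' : ℕ) (φ' : Fin m' → ℂ → ℂ)
          (v' : Fin m' → Fin m → ℂ),
          (∀ i, ContinuousOn (φ' i) Strip) ∧
          (∀ i, DifferentiableOn ℂ (φ' i) OStrip) ∧
          (∀ i, ∃ B : ℝ, ∀ z ∈ Strip, ‖φ' i z‖ ≤ B) ∧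
          (∑ i, φ' i (θ : ℂ) • v' i) = T x ∧
          (∀ t : ℝ, NN₀ (∑ i, φ' i (Complex.I * t) • v' i) ≤ c) ∧
          (∀ t : ℝ, NN₁ (∑ i, φ' i (1 + Complex.I * t) • v' i) ≤ c)} := by
        refine ⟨0, ?_⟩
        rintro c ⟨m', φ', v', -, -, -, -, h5, -⟩
        exact le_trans (hN₀.1 _) (h5 0)
      apply csInf_le hbdd
      refine ⟨m₂ * m₁,
        fun p z => ψ (finProdFinEquiv.symm p).1 z * φ (finProdFinEquiv.symm p).2 z,
        fun p => (S (finProdFinEquiv.symm p).1) (v (finProdFinEquiv.symm p).2),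
        ?_, ?_, ?_, ?_, ?_, ?_⟩
      · exact fun p => (hψc _).mul (hφc _)
      · exact fun p => (hψd _).mul (hφd _)
      · intro p
        obtain ⟨B₁, hB₁⟩ := hψb (finProdFinEquiv.symm p).1
        obtain ⟨B₂, hB₂⟩ := hφb (finProdFinEquiv.symm p).2
        have h0S : (0 : ℂ) ∈ Strip := by constructor <;> simp
        refine ⟨B₁ * B₂, fun z hz => ?_⟩
        rw [norm_mul]
        exact mul_le_mul (hB₁ z hz) (hB₂ z hz) (norm_nonneg _)
          (le_trans (norm_nonneg _) (hB₁ 0 h0S))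
      · rw [prod_sum_eval (fun j => ψ j (θ : ℂ)) S (fun i => φ i (θ : ℂ)) v, hψθ, hφθ]
      · intro t
        rw [prod_sum_eval (fun j => ψ j (Complex.I * t)) S
          (fun i => φ i (Complex.I * t)) v]
        calc NN₀ ((∑ j, ψ j (Complex.I * t) • S j) (∑ i, φ i (Complex.I * t) • v i)) ≤
            opN NM₀ NN₀ ⇑(∑ j, ψ j (Complex.I * t) • S j) *
              NM₀ (∑ i, φ i (Complex.I * t) • v i) := apply_le_opN hM₀ hN₀ _ _
          _ ≤ c' * c := mul_le_mul (hψ0 t) (hφ0 t) (hM₀.1 _) hc'0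
      · intro t
        rw [prod_sum_eval (fun j => ψ j (1 + Complex.I * t)) S
          (fun i => φ i (1 + Complex.I * t)) v]
        calc NN₁ ((∑ j, ψ j (1 + Complex.I * t) • S j)
              (∑ i, φ i (1 + Complex.I * t) • v i)) ≤
            opN NM₁ NN₁ ⇑(∑ j, ψ j (1 + Complex.I * t) • S j) *
              NM₁ (∑ i, φ i (1 + Complex.I * t) • v i) := apply_le_opN hM₁ hN₁ _ _
          _ ≤ c' * c := mul_le_mul (hψ1 t) (hφ1 t) (hM₁.1 _) hc'0
    -- conclude via ε-argument
    apply le_of_forall_pos_le_add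
    intro ε hε
    have hden : (0 : ℝ) < c' + 1 := by linarith
    have hlt : sInf {c : ℝ | ∃ (m₁ : ℕ) (φ : Fin m₁ → ℂ → ℂ) (v : Fin m₁ → Fin n → ℂ),
        (∀ i, ContinuousOn (φ i) Strip) ∧
        (∀ i, DifferentiableOn ℂ (φ i) OStrip) ∧
        (∀ i, ∃ B : ℝ, ∀ z ∈ Strip, ‖φ i z‖ ≤ B) ∧
        (∑ i, φ i (θ : ℂ) • v i) = x ∧
        (∀ t : ℝ, NM₀ (∑ i, φ i (Complex.I * t) • v i) ≤ c) ∧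
        (∀ t : ℝ, NM₁ (∑ i, φ i (1 + Complex.I * t) • v i) ≤ c)} < 1 + ε / (c' + 1) := by
      refine lt_of_le_of_lt hx ?_
      have : 0 < ε / (c' + 1) := div_pos hε hden
      linarith
    obtain ⟨c, hcmem, hclt⟩ :=
      exists_lt_of_csInf_lt ⟨_, const_mem_interp_set θ NM₀ NM₁ x⟩ hlt
    have h1 := key c hcmem
    have hc0 : 0 ≤ c := by
      obtain ⟨m₁, φ, v, -, -, -, -, h5, -⟩ := hcmem
      exact le_trans (hM₀.1 _) (h5 0)
    have h2 : c' * c ≤ c' * (1 + ε / (c' + 1)) :=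
      mul_le_mul_of_nonneg_left hclt.le hc'0
    have h3 : c' * (1 + ε / (c' + 1)) ≤ c' + ε := by
      rw [mul_add, mul_one, ← mul_div_assoc]
      have h4 : c' * ε / (c' + 1) ≤ ε := by
        rw [div_le_iff₀ hden]
        nlinarith
      linarith [h4]
    rw [interpN] at h1
    linarith [h1, h2, h3]
  · rw [interpN]
    apply Real.sInf_nonneg
    rintro c' ⟨m₂, ψ, S, -, -, -, -, h5, -⟩
    exact le_trans (opN_nonneg _ hN₀.1 _) (h5 0)

end Paper
end
end
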